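/- arXiv:math/9905166 — 5 statements merged into one kernel-verified Lean document; each statement's English description precedes it below -/
import Mathlib

section
/- Let B be an even unimodular ℤ-lattice, let (V, φ) be the real quadratic space containing A = B(2) ⊕ II_{1,1} as a full-rank lattice, and let Â be the unique odd unimodular full-rank lattice in (V, φ) containing √2·A* (where A* is the dual lattice of A in V with respect to φ). Let Â^e = {x ∈ Â : φ(x,x) ∈ 2ℤ} be the even sublattice of Â. Then A = √2·((Â^e)*), where (Â^e)* is the dual lattice of Â^e in V with respect to φ. -/
open Matrix

/-- Gram matrix of the odd unimodular lattice `I_{p,m}`: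
diagonal with `p` entries `+1` and `m` entries `-1`. -/
def gramI (p m : ℕ) : Matrix (Fin (p + m)) (Fin (p + m)) ℤ :=
  Matrix.diagonal fun i => if (i : ℕ) < p then 1 else -1

/-- Gram matrix of the even unimodular lattice `II_{1,1}`. -/
def gramII : Matrix (Fin 2) (Fin 2) ℤ := !![0, 1; 1, 0]

/-- Gram matrix of the direct sum of two lattices. -/
def gramSum {n m : ℕ} (G : Matrix (Fin n) (Fin n) ℤ) (H : Matrix (Fin m) (Fin m) ℤ) :
    Matrix (Fin (n + m)) (Fin (n + m)) ℤ :=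
  Matrix.reindex finSumFinEquiv finSumFinEquiv (Matrix.fromBlocks G 0 0 H)

/-- A lattice (given by its Gram matrix) is even when every vector has even norm. -/
def EvenGram {n : ℕ} (G : Matrix (Fin n) (Fin n) ℤ) : Prop :=
  ∀ v : Fin n → ℤ, Even (v ⬝ᵥ G.mulVec v)

/-- A lattice (given by its Gram matrix) has signature `(p, m)` when its real extension is
equivalent to the diagonal form with `p` entries `+1` and `m` entries `-1`. -/
def HasSignature {n : ℕ} (G : Matrix (Fin n) (Fin n) ℤ) (p m : ℕ) : Prop :=
  n = p + m ∧ ∃ P : Matrix (Fin n) (Fin n) ℝ, IsUnit P.det ∧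
    Pᵀ * (G.map (Int.cast : ℤ → ℝ)) * P =
      Matrix.diagonal fun i : Fin n => if (i : ℕ) < p then 1 else -1
/-- The automorphism group of the lattice with Gram matrix `G`: invertible integer matrices
preserving the bilinear form. -/
def gramAut {n : ℕ} (G : Matrix (Fin n) (Fin n) ℤ) : Subgroup (Matrix (Fin n) (Fin n) ℤ)ˣ where
  carrier := {P | (P : Matrix (Fin n) (Fin n) ℤ)ᵀ * G * (P : Matrix (Fin n) (Fin n) ℤ) = G}
  one_mem' := by simp
  mul_mem' := by
    intro P Q hP hQ
    have hP' : (P : Matrix (Fin n) (Fin n) ℤ)ᵀ * G * (P : Matrix (Fin n) (Fin n) ℤ) = G := hP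
    have hQ' : (Q : Matrix (Fin n) (Fin n) ℤ)ᵀ * G * (Q : Matrix (Fin n) (Fin n) ℤ) = G := hQ
    show ((P * Q : (Matrix (Fin n) (Fin n) ℤ)ˣ) : Matrix (Fin n) (Fin n) ℤ)ᵀ * G *
        ((P * Q : (Matrix (Fin n) (Fin n) ℤ)ˣ) : Matrix (Fin n) (Fin n) ℤ) = G
    have hc : ((P * Q : (Matrix (Fin n) (Fin n) ℤ)ˣ) : Matrix (Fin n) (Fin n) ℤ) =
        (P : Matrix (Fin n) (Fin n) ℤ) * (Q : Matrix (Fin n) (Fin n) ℤ) := rfl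
    rw [hc, Matrix.transpose_mul]
    calc (Q : Matrix (Fin n) (Fin n) ℤ)ᵀ * (P : Matrix (Fin n) (Fin n) ℤ)ᵀ * G *
          ((P : Matrix (Fin n) (Fin n) ℤ) * (Q : Matrix (Fin n) (Fin n) ℤ))
        = (Q : Matrix (Fin n) (Fin n) ℤ)ᵀ *
            ((P : Matrix (Fin n) (Fin n) ℤ)ᵀ * G * (P : Matrix (Fin n) (Fin n) ℤ)) *
            (Q : Matrix (Fin n) (Fin n) ℤ) := by simp only [Matrix.mul_assoc]
      _ = G := by rw [hP', hQ']
  inv_mem' := by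
    intro P hP
    have hP' : (P : Matrix (Fin n) (Fin n) ℤ)ᵀ * G * (P : Matrix (Fin n) (Fin n) ℤ) = G := hP
    show ((P⁻¹ : (Matrix (Fin n) (Fin n) ℤ)ˣ) : Matrix (Fin n) (Fin n) ℤ)ᵀ * G *
        ((P⁻¹ : (Matrix (Fin n) (Fin n) ℤ)ˣ) : Matrix (Fin n) (Fin n) ℤ) = G
    calc ((P⁻¹ : (Matrix (Fin n) (Fin n) ℤ)ˣ) : Matrix (Fin n) (Fin n) ℤ)ᵀ * G *
          ((P⁻¹ : (Matrix (Fin n) (Fin n) ℤ)ˣ) : Matrix (Fin n) (Fin n) ℤ)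
        = ((P⁻¹ : (Matrix (Fin n) (Fin n) ℤ)ˣ) : Matrix (Fin n) (Fin n) ℤ)ᵀ *
            ((P : Matrix (Fin n) (Fin n) ℤ)ᵀ * G * (P : Matrix (Fin n) (Fin n) ℤ)) *
            ((P⁻¹ : (Matrix (Fin n) (Fin n) ℤ)ˣ) : Matrix (Fin n) (Fin n) ℤ) := by rw [hP']
      _ = ((P : Matrix (Fin n) (Fin n) ℤ) *
            ((P⁻¹ : (Matrix (Fin n) (Fin n) ℤ)ˣ) : Matrix (Fin n) (Fin n) ℤ))ᵀ * G *
            ((P : Matrix (Fin n) (Fin n) ℤ) *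
            ((P⁻¹ : (Matrix (Fin n) (Fin n) ℤ)ˣ) : Matrix (Fin n) (Fin n) ℤ)) := by
          simp only [Matrix.transpose_mul, Matrix.mul_assoc]
      _ = G := by rw [Units.mul_inv]; simp
/-- The real symmetric bilinear form on `Fin N → ℝ` with matrix `G`. -/
def gramBilinR {N : ℕ} (G : Matrix (Fin N) (Fin N) ℤ) :
    (Fin N → ℝ) →ₗ[ℝ] (Fin N → ℝ) →ₗ[ℝ] ℝ :=
  LinearMap.mk₂ ℝ (fun x y => x ⬝ᵥ (G.map (Int.cast : ℤ → ℝ)).mulVec y)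
    (fun x x' y => by simp only [add_dotProduct])
    (fun c x y => by simp only [smul_dotProduct])
    (fun x y y' => by simp only [Matrix.mulVec_add, dotProduct_add])
    (fun c x y => by simp only [Matrix.mulVec_smul, dotProduct_smul])

/-- `L` is a full-rank lattice in the real quadratic space `(V, φ)` whose Gram matrix in some
basis is the integer matrix `G`; i.e. `L` is (as a lattice with the restricted form)
a copy of the lattice with Gram matrix `G`. -/
def SpansWithGram {V : Type*} [AddCommGroup V] [Module ℝ V]
    (φ : V →ₗ[ℝ] V →ₗ[ℝ] ℝ) {n : ℕ} (L : Submodule ℤ V) (G : Matrix (Fin n) (Fin n) ℤ) : Prop :=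
  ∃ b : Module.Basis (Fin n) ℝ V, L = Submodule.span ℤ (Set.range ⇑b) ∧
    ∀ i j, φ (b i) (b j) = ((G i j : ℤ) : ℝ)

/-- The dual of a subset `S` of a real quadratic space: vectors pairing integrally with `S`. -/
def dualSet {V : Type*} [AddCommGroup V] [Module ℝ V]
    (φ : V →ₗ[ℝ] V →ₗ[ℝ] ℝ) (S : Set V) : Set V :=
  {x | ∀ y ∈ S, ∃ k : ℤ, φ x y = (k : ℝ)}

/-- `M` is an odd unimodular full-rank lattice in the real quadratic space `(V, φ)`. -/
def IsOddUnimodularLat {V : Type*} [AddCommGroup V] [Module ℝ V]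
    (φ : V →ₗ[ℝ] V →ₗ[ℝ] ℝ) (M : Submodule ℤ V) : Prop :=
  (∃ (m : ℕ) (H : Matrix (Fin m) (Fin m) ℤ), SpansWithGram φ M H ∧ IsUnit H.det) ∧
    ¬ ∀ x ∈ M, ∃ k : ℤ, φ x x = 2 * (k : ℝ)

/-- The standard integer lattice inside `Fin N → ℝ`. -/
def stdLat (N : ℕ) : Submodule ℤ (Fin N → ℝ) :=
  Submodule.span ℤ (Set.range fun i : Fin N => (Pi.single i (1 : ℝ) : Fin N → ℝ))

/-- Coordinatewise inclusion `ℤ^N → ℚ^N`. -/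
def intToRat (N : ℕ) : (Fin N → ℤ) →ₗ[ℤ] (Fin N → ℚ) where
  toFun x := fun i => (x i : ℚ)
  map_add' x y := by funext i; push_cast; simp
  map_smul' c x := by
    funext i
    simp only [Pi.smul_apply, smul_eq_mul, RingHom.id_apply, zsmul_eq_mul]
    push_cast
    ring

/-- The dual lattice of `ℤ^N` (with the form given by the Gram matrix `G`)
inside `ℚ^N`. -/
def ratDual {N : ℕ} (G : Matrix (Fin N) (Fin N) ℤ) : Submodule ℤ (Fin N → ℚ) where
  carrier := {x | ∀ y : Fin N → ℤ, ∃ k : ℤ,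
    x ⬝ᵥ (G.map (Int.cast : ℤ → ℚ)).mulVec (intToRat N y) = (k : ℚ)}
  zero_mem' := by intro y; exact ⟨0, by simp⟩
  add_mem' := by
    intro a b ha hb y
    obtain ⟨k, hk⟩ := ha y
    obtain ⟨l, hl⟩ := hb y
    exact ⟨k + l, by rw [add_dotProduct, hk, hl]; push_cast; ring⟩
  smul_mem' := by
    intro c x hx y
    obtain ⟨k, hk⟩ := hx y
    refine ⟨c * k, ?_⟩
    show (c • x) ⬝ᵥ _ = _
    rw [smul_dotProduct, hk, zsmul_eq_mul]
    push_cast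
    ring

/-- The set of vectors of `ℚ^N` pairing integrally with the sublattice `A` of `ℤ^N`,
with respect to the form with Gram matrix `G`. -/
def pairDual {N : ℕ} (G : Matrix (Fin N) (Fin N) ℤ) (A : Submodule ℤ (Fin N → ℤ)) :
    Submodule ℤ (Fin N → ℚ) where
  carrier := {x | ∀ y ∈ A, ∃ k : ℤ,
    x ⬝ᵥ (G.map (Int.cast : ℤ → ℚ)).mulVec (intToRat N y) = (k : ℚ)}
  zero_mem' := by intro y _; exact ⟨0, by simp⟩
  add_mem' := by
    intro a b ha hb y hy
    obtain ⟨k, hk⟩ := ha y hy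
    obtain ⟨l, hl⟩ := hb y hy
    exact ⟨k + l, by rw [add_dotProduct, hk, hl]; push_cast; ring⟩
  smul_mem' := by
    intro c x hx y hy
    obtain ⟨k, hk⟩ := hx y hy
    refine ⟨c * k, ?_⟩
    show (c • x) ⬝ᵥ _ = _
    rw [smul_dotProduct, hk, zsmul_eq_mul]
    push_cast
    ring

/-- The dual lattice `A*` of a sublattice `A` of `ℤ^N`, taken inside `A ⊗ ℚ`
(realized as the ℚ-span of `A` in `ℚ^N`), with respect to the form with Gram matrix `G`. -/
def relDual {N : ℕ} (G : Matrix (Fin N) (Fin N) ℤ) (A : Submodule ℤ (Fin N → ℤ)) :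
    Submodule ℤ (Fin N → ℚ) :=
  (Submodule.span ℚ (intToRat N '' (A : Set (Fin N → ℤ)))).restrictScalars ℤ ⊓ pairDual G A

/-- The orthogonal complement in `ℤ^N` (with Gram matrix `G`) of a sublattice `A`. -/
def perpSub {N : ℕ} (G : Matrix (Fin N) (Fin N) ℤ) (A : Submodule ℤ (Fin N → ℤ)) :
    Submodule ℤ (Fin N → ℤ) where
  carrier := {x | ∀ a ∈ A, x ⬝ᵥ G.mulVec a = 0}
  zero_mem' := by intro a _; simp
  add_mem' := by
    intro x y hx hy a ha
    rw [add_dotProduct, hx a ha, hy a ha, add_zero]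
  smul_mem' := by
    intro c x hx a ha
    show (c • x) ⬝ᵥ _ = 0
    rw [smul_dotProduct, hx a ha, smul_zero]

/-- A vector of a lattice is primitive if it is not a non-unit integer multiple. -/
def IsPrimVec {N : ℕ} (v : Fin N → ℤ) : Prop :=
  ∀ (k : ℤ) (w : Fin N → ℤ), v = k • w → IsUnit k

/-- A sublattice `A` of `ℤ^N` is primitive if the quotient is torsion-free. -/
def IsPrimSub {N : ℕ} (A : Submodule ℤ (Fin N → ℤ)) : Prop :=
  ∀ (x : Fin N → ℤ) (k : ℤ), k ≠ 0 → k • x ∈ A → x ∈ A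

/-- The quotient `A^⊥ / A` of `ℤ^N` (with Gram matrix `G`), with its induced bilinear form,
is isometric to the lattice with Gram matrix `H`: there is a surjection `π` from `A^⊥` with
kernel `A ∩ A^⊥` identifying the induced form with `H`. -/
def QuotIsometric {N m : ℕ} (G : Matrix (Fin N) (Fin N) ℤ) (A : Submodule ℤ (Fin N → ℤ))
    (H : Matrix (Fin m) (Fin m) ℤ) : Prop :=
  ∃ π : (perpSub G A) →ₗ[ℤ] (Fin m → ℤ), Function.Surjective π ∧
    (∀ x : perpSub G A, π x = 0 ↔ (x : Fin N → ℤ) ∈ A) ∧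
    (∀ x y : perpSub G A,
      (x : Fin N → ℤ) ⬝ᵥ G.mulVec (y : Fin N → ℤ) = π x ⬝ᵥ H.mulVec (π y))

noncomputable section PLS4
namespace PLS4

variable {n : ℕ}

/-- left block index -/
def li (n : ℕ) (i : Fin n) : Fin (n + 2) := finSumFinEquiv (Sum.inl i)
/-- right block index -/
def ri (n : ℕ) (j : Fin 2) : Fin (n + 2) := finSumFinEquiv (Sum.inr j)

lemma phi_apply (GB : Matrix (Fin n) (Fin n) ℤ) (x y : Fin (n + 2) → ℝ) :
    gramBilinR (gramSum ((2 : ℤ) • GB) gramII) x y =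
      2 * ((fun i => x (li n i)) ⬝ᵥ (GB.map (Int.cast : ℤ → ℝ)).mulVec (fun i => y (li n i)))
        + (x (ri n 0) * y (ri n 1) + x (ri n 1) * y (ri n 0)) := by
  show x ⬝ᵥ ((gramSum ((2:ℤ) • GB) gramII).map (Int.cast : ℤ → ℝ)).mulVec y = _
  have hmap : (gramSum ((2:ℤ) • GB) gramII).map (Int.cast : ℤ → ℝ) =
      Matrix.reindex finSumFinEquiv finSumFinEquiv
        (Matrix.fromBlocks (((2:ℤ) • GB).map (Int.cast : ℤ → ℝ)) 0 0
          (gramII.map (Int.cast : ℤ → ℝ))) := by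
    ext i j
    simp [gramSum, Matrix.reindex_apply, Matrix.submatrix, Matrix.fromBlocks]
    rcases finSumFinEquiv.symm i with a | a <;> rcases finSumFinEquiv.symm j with b | b <;>
      simp [Matrix.fromBlocks]
  rw [hmap, Matrix.reindex_apply, Matrix.submatrix_mulVec_equiv, Equiv.symm_symm,
    dotProduct_comp_equiv_symm, Matrix.fromBlocks_mulVec]
  rw [show x ∘ finSumFinEquiv =
    Sum.elim ((x ∘ finSumFinEquiv) ∘ Sum.inl) ((x ∘ finSumFinEquiv) ∘ Sum.inr) from
    (Sum.elim_comp_inl_inr _).symm, sumElim_dotProduct_sumElim]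
  congr 1
  · have h2 : ((2:ℤ) • GB).map (Int.cast : ℤ → ℝ) = (2:ℝ) • GB.map (Int.cast : ℤ → ℝ) := by
      ext i j; simp [Matrix.map]
    rw [Matrix.zero_mulVec, add_zero, h2, Matrix.smul_mulVec, dotProduct_smul,
      smul_eq_mul]
    rfl
  · rw [Matrix.zero_mulVec, zero_add]
    show _ ⬝ᵥ (gramII.map _).mulVec _ = _
    simp [gramII, Matrix.mulVec, dotProduct, Fin.sum_univ_two]
    rfl

end PLS4

noncomputable section PLS4b
namespace PLS4

/-- Submodule of integer-coordinate vectors. -/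
def intCoords (N : ℕ) : Submodule ℤ (Fin N → ℝ) where
  carrier := {x | ∀ i, ∃ k : ℤ, x i = (k : ℝ)}
  zero_mem' := fun i => ⟨0, by simp⟩
  add_mem' := by
    intro a b ha hb i
    obtain ⟨k, hk⟩ := ha i; obtain ⟨l, hl⟩ := hb i
    exact ⟨k + l, by simp [hk, hl]⟩
  smul_mem' := by
    intro c x hx i
    obtain ⟨k, hk⟩ := hx i
    refine ⟨c * k, ?_⟩
    show c • x i = _
    rw [hk, zsmul_eq_mul]
    push_cast
    ring

lemma mem_span_single {N : ℕ} (x : Fin N → ℝ) :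
    x ∈ Submodule.span ℤ (Set.range fun i : Fin N => (Pi.single i (1:ℝ) : Fin N → ℝ)) ↔
      ∀ i, ∃ k : ℤ, x i = (k : ℝ) := by
  constructor
  · intro hx
    have : Submodule.span ℤ (Set.range fun i : Fin N => (Pi.single i (1:ℝ) : Fin N → ℝ)) ≤
        intCoords N := by
      rw [Submodule.span_le]
      rintro - ⟨i, rfl⟩ j
      by_cases h : j = i
      · exact ⟨1, by subst h; simp⟩
      · exact ⟨0, by simp [Pi.single_apply, h]⟩
    exact this hx
  · intro h
    have hx : x = ∑ i : Fin N, ((h i).choose : ℤ) • (Pi.single i (1:ℝ) : Fin N → ℝ) := by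
      funext j
      rw [Finset.sum_apply]
      have : ∀ i : Fin N, (((h i).choose : ℤ) • (Pi.single i (1:ℝ) : Fin N → ℝ)) j
          = if j = i then ((h i).choose : ℝ) else 0 := by
        intro i; by_cases hji : j = i <;> simp [Pi.single_apply, hji]
      rw [Finset.sum_congr rfl fun i _ => this i, Finset.sum_ite_eq Finset.univ j _,
        if_pos (Finset.mem_univ j)]
      exact (h j).choose_spec
    rw [hx]
    exact Submodule.sum_mem _ fun i _ =>
      Submodule.smul_mem _ _ (Submodule.subset_span ⟨i, rfl⟩)

lemma mem_stdLat {N : ℕ} (x : Fin N → ℝ) :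
    x ∈ stdLat N ↔ ∀ i, ∃ k : ℤ, x i = (k : ℝ) := mem_span_single x

lemma mem_span_basis_map {N : ℕ} (E : (Fin N → ℝ) ≃ₗ[ℝ] (Fin N → ℝ)) (x : Fin N → ℝ) :
    x ∈ Submodule.span ℤ (Set.range fun i : Fin N => E (Pi.single i (1:ℝ))) ↔
      ∀ i, ∃ k : ℤ, E.symm x i = (k : ℝ) := by
  have hr : (Set.range fun i : Fin N => E (Pi.single i (1:ℝ)))
      = (E.restrictScalars ℤ) '' (Set.range fun i : Fin N => (Pi.single i (1:ℝ) : Fin N → ℝ)) := by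
    rw [← Set.range_comp]; rfl
  rw [hr, ← LinearEquiv.coe_coe (e := E.restrictScalars ℤ), ← Submodule.map_span]
  exact (Submodule.mem_map_equiv _).trans (mem_span_single _)

end PLS4
end PLS4b

noncomputable section PLS4c
namespace PLS4

variable {n : ℕ}

lemma symm_li (i : Fin n) : finSumFinEquiv.symm (li n i) = Sum.inl i :=
  Equiv.symm_apply_apply _ _

lemma symm_ri (j : Fin 2) : finSumFinEquiv.symm (ri n j) = Sum.inr j :=
  Equiv.symm_apply_apply _ _

lemma li_inj {i j : Fin n} (h : li n i = li n j) : i = j := by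
  have := finSumFinEquiv.injective h
  exact Sum.inl_injective this

lemma li_ne_ri (i : Fin n) (j : Fin 2) : li n i ≠ ri n j := by
  intro h
  exact absurd (finSumFinEquiv.injective h) (by simp)

lemma ri_inj {i j : Fin 2} (h : (ri n i) = ri n j) : i = j := by
  have := finSumFinEquiv.injective h
  exact Sum.inr_injective this

lemma forall_index {P : Fin (n + 2) → Prop} :
    (∀ p, P p) ↔ (∀ i, P (li n i)) ∧ (∀ j, P (ri n j)) := by
  constructor
  · exact fun h => ⟨fun i => h _, fun j => h _⟩
  · rintro ⟨h1, h2⟩ p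
    rcases hq : finSumFinEquiv.symm p with i | j
    · have hp : p = li n i := by
        rw [li, ← hq, Equiv.apply_symm_apply]
      rw [hp]; exact h1 i
    · have hp : p = ri n j := by
        rw [ri, ← hq, Equiv.apply_symm_apply]
      rw [hp]; exact h2 j

/-- forward change of basis -/
def Efun (n : ℕ) (x : Fin (n + 2) → ℝ) : Fin (n + 2) → ℝ := fun p =>
  Sum.elim (fun i => (Real.sqrt 2)⁻¹ * x (li n i))
    (fun j => if j = 0 then Real.sqrt 2 * x (ri n 0) + (Real.sqrt 2)⁻¹ * x (ri n 1)
      else (Real.sqrt 2)⁻¹ * x (ri n 1)) (finSumFinEquiv.symm p)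

/-- inverse change of basis -/
def Gfun (n : ℕ) (y : Fin (n + 2) → ℝ) : Fin (n + 2) → ℝ := fun p =>
  Sum.elim (fun i => Real.sqrt 2 * y (li n i))
    (fun j => if j = 0 then (Real.sqrt 2)⁻¹ * (y (ri n 0) - y (ri n 1))
      else Real.sqrt 2 * y (ri n 1)) (finSumFinEquiv.symm p)

@[simp] lemma Efun_li (x : Fin (n+2) → ℝ) (i : Fin n) :
    Efun n x (li n i) = (Real.sqrt 2)⁻¹ * x (li n i) := by
  rw [Efun, symm_li]; rfl

@[simp] lemma Efun_ri0 (x : Fin (n+2) → ℝ) :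
    Efun n x (ri n 0) = Real.sqrt 2 * x (ri n 0) + (Real.sqrt 2)⁻¹ * x (ri n 1) := by
  rw [Efun, symm_ri]; rfl

@[simp] lemma Efun_ri1 (x : Fin (n+2) → ℝ) :
    Efun n x (ri n 1) = (Real.sqrt 2)⁻¹ * x (ri n 1) := by
  rw [Efun, symm_ri]; rfl

@[simp] lemma Gfun_li (y : Fin (n+2) → ℝ) (i : Fin n) :
    Gfun n y (li n i) = Real.sqrt 2 * y (li n i) := by
  rw [Gfun, symm_li]; rfl

@[simp] lemma Gfun_ri0 (y : Fin (n+2) → ℝ) :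
    Gfun n y (ri n 0) = (Real.sqrt 2)⁻¹ * (y (ri n 0) - y (ri n 1)) := by
  rw [Gfun, symm_ri]; rfl

@[simp] lemma Gfun_ri1 (y : Fin (n+2) → ℝ) :
    Gfun n y (ri n 1) = Real.sqrt 2 * y (ri n 1) := by
  rw [Gfun, symm_ri]; rfl

lemma sqrt2_mul_self : Real.sqrt 2 * Real.sqrt 2 = 2 :=
  Real.mul_self_sqrt (by norm_num)

lemma sqrt2_ne : Real.sqrt 2 ≠ 0 := by positivity

lemma sqrt2_mul_inv : Real.sqrt 2 * (Real.sqrt 2)⁻¹ = 1 :=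
  mul_inv_cancel₀ sqrt2_ne

lemma inv_mul_sqrt2 : (Real.sqrt 2)⁻¹ * Real.sqrt 2 = 1 :=
  inv_mul_cancel₀ sqrt2_ne

/-- the change of basis as a linear equivalence -/
def Eequiv (n : ℕ) : (Fin (n + 2) → ℝ) ≃ₗ[ℝ] (Fin (n + 2) → ℝ) where
  toFun := Efun n
  invFun := Gfun n
  map_add' x y := by
    funext p
    rcases hq : finSumFinEquiv.symm p with i | j <;> simp [Efun, hq]
    · ring
    · split_ifs <;> ring
  map_smul' c x := by
    funext p
    rcases hq : finSumFinEquiv.symm p with i | j <;> simp [Efun, hq]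
    · ring
    · split_ifs <;> ring
  left_inv x := by
    show Gfun n (Efun n x) = x
    funext p
    rcases hq : finSumFinEquiv.symm p with i | j
    · have hp : p = li n i := by rw [li, ← hq, Equiv.apply_symm_apply]
      subst hp
      rw [Gfun_li, Efun_li, ← mul_assoc, sqrt2_mul_inv, one_mul]
    · have hp : p = ri n j := by rw [ri, ← hq, Equiv.apply_symm_apply]
      subst hp
      have hj : j = 0 ∨ j = 1 := by omega
      rcases hj with rfl | rfl
      · simp only [Gfun_ri0, Efun_ri0, Efun_ri1]
        rw [mul_sub]
        rw [show (Real.sqrt 2)⁻¹ * (Real.sqrt 2 * x (ri n 0) + (Real.sqrt 2)⁻¹ * x (ri n 1))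
            = (Real.sqrt 2)⁻¹ * Real.sqrt 2 * x (ri n 0)
              + (Real.sqrt 2)⁻¹ * ((Real.sqrt 2)⁻¹ * x (ri n 1)) by ring]
        rw [inv_mul_sqrt2]
        ring
      · simp only [Gfun_ri1, Efun_ri1, ← mul_assoc, sqrt2_mul_inv, one_mul]
  right_inv y := by
    show Efun n (Gfun n y) = y
    funext p
    rcases hq : finSumFinEquiv.symm p with i | j
    · have hp : p = li n i := by rw [li, ← hq, Equiv.apply_symm_apply]
      subst hp
      simp only [Efun_li, Gfun_li, ← mul_assoc, inv_mul_sqrt2, one_mul]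
    · have hp : p = ri n j := by rw [ri, ← hq, Equiv.apply_symm_apply]
      subst hp
      have hj : j = 0 ∨ j = 1 := by omega
      rcases hj with rfl | rfl
      · simp only [Efun_ri0, Gfun_ri0, Gfun_ri1]
        rw [show Real.sqrt 2 * ((Real.sqrt 2)⁻¹ * (y (ri n 0) - y (ri n 1)))
            = Real.sqrt 2 * (Real.sqrt 2)⁻¹ * (y (ri n 0) - y (ri n 1)) by ring,
          sqrt2_mul_inv, ← mul_assoc, inv_mul_sqrt2]
        ring
      · simp only [Efun_ri1, Gfun_ri1, ← mul_assoc, inv_mul_sqrt2, one_mul]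

@[simp] lemma Eequiv_apply (x : Fin (n+2) → ℝ) : Eequiv n x = Efun n x := rfl
@[simp] lemma Eequiv_symm_apply (y : Fin (n+2) → ℝ) : (Eequiv n).symm y = Gfun n y := rfl

end PLS4
end PLS4c

noncomputable section PLS4d
namespace PLS4

variable {n : ℕ}

lemma mulVec_cast {m : ℕ} (A : Matrix (Fin m) (Fin m) ℤ) (u : Fin m → ℤ) :
    (A.map (Int.cast : ℤ → ℝ)).mulVec (fun j => (u j : ℝ)) = fun i => ((A.mulVec u i : ℤ) : ℝ) := by
  funext i
  simp [Matrix.mulVec, dotProduct, Matrix.map]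

lemma dot_cast {m : ℕ} (A : Matrix (Fin m) (Fin m) ℤ) (u v : Fin m → ℤ) :
    (fun i => (u i : ℝ)) ⬝ᵥ (A.map (Int.cast : ℤ → ℝ)).mulVec (fun j => (v j : ℝ))
      = ((u ⬝ᵥ A.mulVec v : ℤ) : ℝ) := by
  rw [mulVec_cast]
  simp [dotProduct]

lemma int_of_mulVec {m : ℕ} (A : Matrix (Fin m) (Fin m) ℤ) (hA : IsUnit A.det)
    (w : Fin m → ℝ) (h : ∀ i, ∃ k : ℤ, ((A.map (Int.cast : ℤ → ℝ)).mulVec w) i = (k : ℝ)) :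
    ∀ i, ∃ k : ℤ, w i = (k : ℝ) := by
  have : Invertible A := A.invertibleOfIsUnitDet hA
  set B := ⅟A with hB
  have hw : w = (B.map (Int.cast : ℤ → ℝ)).mulVec ((A.map (Int.cast : ℤ → ℝ)).mulVec w) := by
    have hmm : B.map (Int.cast : ℤ → ℝ) * A.map (Int.cast : ℤ → ℝ)
        = (B * A).map (Int.cast : ℤ → ℝ) := by
      rw [show (Int.cast : ℤ → ℝ) = ⇑(Int.castRingHom ℝ) from rfl, ← Matrix.map_mul]
    rw [Matrix.mulVec_mulVec, hmm, invOf_mul_self, Matrix.map_one _ (by simp) (by simp),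
      Matrix.one_mulVec]
  have hAw : (A.map (Int.cast : ℤ → ℝ)).mulVec w = fun j => (((h j).choose : ℤ) : ℝ) := by
    funext j; exact (h j).choose_spec
  intro i
  refine ⟨(B.mulVec fun j => (h j).choose) i, ?_⟩
  conv_lhs => rw [hw, hAw]
  rw [mulVec_cast]

/-- the odd unimodular lattice M -/
def Mlat (n : ℕ) : Submodule ℤ (Fin (n + 2) → ℝ) :=
  Submodule.span ℤ (Set.range fun p : Fin (n + 2) => Eequiv n (Pi.single p 1))

lemma mem_Mlat (x : Fin (n + 2) → ℝ) :
    x ∈ Mlat n ↔ ∀ p, ∃ k : ℤ, Gfun n x p = (k : ℝ) := by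
  rw [Mlat, mem_span_basis_map]
  rfl

lemma mem_Mlat' (x : Fin (n + 2) → ℝ) :
    x ∈ Mlat n ↔ (∀ i, ∃ k : ℤ, Real.sqrt 2 * x (li n i) = (k : ℝ)) ∧
      (∃ k : ℤ, (Real.sqrt 2)⁻¹ * (x (ri n 0) - x (ri n 1)) = (k : ℝ)) ∧
      (∃ k : ℤ, Real.sqrt 2 * x (ri n 1) = (k : ℝ)) := by
  rw [mem_Mlat, forall_index]
  constructor
  · rintro ⟨h1, h2⟩
    refine ⟨fun i => by simpa using h1 i, by simpa using h2 0, by simpa using h2 1⟩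
  · rintro ⟨h1, h2, h3⟩
    refine ⟨fun i => by simpa using h1 i, fun j => ?_⟩
    have hj : j = 0 ∨ j = 1 := by omega
    rcases hj with rfl | rfl
    · simpa using h2
    · simpa using h3

end PLS4
end PLS4d

noncomputable section PLS4e
namespace PLS4

variable {n : ℕ}

lemma single_li_li (i j : Fin n) :
    (Pi.single (li n i) (1:ℝ) : Fin (n+2) → ℝ) (li n j) = (Pi.single i (1:ℝ) : Fin n → ℝ) j := by
  by_cases h : j = i
  · subst h; simp
  · rw [Pi.single_apply, Pi.single_apply, if_neg h, if_neg (fun hc => h (li_inj hc))]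

lemma single_li_ri (i : Fin n) (j : Fin 2) :
    (Pi.single (li n i) (1:ℝ) : Fin (n+2) → ℝ) (ri n j) = 0 := by
  rw [Pi.single_apply, if_neg (fun hc => li_ne_ri i j hc.symm)]

lemma single_ri_li (j : Fin 2) (i : Fin n) :
    (Pi.single (ri n j) (1:ℝ) : Fin (n+2) → ℝ) (li n i) = 0 := by
  rw [Pi.single_apply, if_neg (li_ne_ri i j)]

lemma single_ri_ri (j j' : Fin 2) :
    (Pi.single (ri n j) (1:ℝ) : Fin (n+2) → ℝ) (ri n j') = if j' = j then 1 else 0 := by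
  rw [Pi.single_apply]
  by_cases h : j' = j
  · simp [h]
  · rw [if_neg (fun hc => h (ri_inj hc)), if_neg h]

lemma single_dot (A : Matrix (Fin n) (Fin n) ℤ) (a b : ℝ) (i j : Fin n) :
    (fun p => a * (Pi.single i (1:ℝ) : Fin n → ℝ) p) ⬝ᵥ (A.map (Int.cast : ℤ → ℝ)).mulVec
      (fun p => b * (Pi.single j (1:ℝ) : Fin n → ℝ) p) = a * b * (A i j : ℝ) := by
  have h1 : (fun p => a * (Pi.single i (1:ℝ) : Fin n → ℝ) p) = a • (Pi.single i (1:ℝ) : Fin n → ℝ) := by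
    funext p; simp
  have h2 : (fun p => b * (Pi.single j (1:ℝ) : Fin n → ℝ) p) = b • (Pi.single j (1:ℝ) : Fin n → ℝ) := by
    funext p; simp
  rw [h1, h2, Matrix.mulVec_smul, smul_dotProduct, dotProduct_smul,
    Matrix.mulVec_single, smul_eq_mul, smul_eq_mul]
  rw [single_dotProduct]
  simp [Matrix.map_apply]
  ring

/-- Gram matrix of M -/
def Hmat (n : ℕ) (GB : Matrix (Fin n) (Fin n) ℤ) : Matrix (Fin (n+2)) (Fin (n+2)) ℤ :=
  Matrix.reindex finSumFinEquiv finSumFinEquiv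
    (Matrix.fromBlocks GB 0 0 !![0, 1; 1, 1])

lemma Hmat_det (GB : Matrix (Fin n) (Fin n) ℤ) (h : IsUnit GB.det) : IsUnit (Hmat n GB).det := by
  rw [Hmat, Matrix.det_reindex_self, Matrix.det_fromBlocks_zero₂₁, Matrix.det_fin_two_of]
  simpa using h.neg

end PLS4
end PLS4e

noncomputable section PLS4f
namespace PLS4

variable {n : ℕ}

lemma inv2 : (Real.sqrt 2)⁻¹ * (Real.sqrt 2)⁻¹ = (2:ℝ)⁻¹ := by
  rw [← mul_inv, sqrt2_mul_self]

lemma index_cases (p : Fin (n + 2)) : (∃ i, p = li n i) ∨ p = ri n 0 ∨ p = ri n 1 := by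
  rcases hq : finSumFinEquiv.symm p with i | j
  · exact Or.inl ⟨i, by rw [li, ← hq, Equiv.apply_symm_apply]⟩
  · have hp : p = ri n j := by rw [ri, ← hq, Equiv.apply_symm_apply]
    have hj : j = 0 ∨ j = 1 := by omega
    rcases hj with rfl | rfl
    exacts [Or.inr (Or.inl hp), Or.inr (Or.inr hp)]

lemma Hmat_li_li (GB : Matrix (Fin n) (Fin n) ℤ) (i j : Fin n) :
    Hmat n GB (li n i) (li n j) = GB i j := by
  rw [Hmat, Matrix.reindex_apply, Matrix.submatrix_apply, symm_li, symm_li]; rfl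

lemma Hmat_li_ri (GB : Matrix (Fin n) (Fin n) ℤ) (i : Fin n) (j : Fin 2) :
    Hmat n GB (li n i) (ri n j) = 0 := by
  rw [Hmat, Matrix.reindex_apply, Matrix.submatrix_apply, symm_li, symm_ri]; rfl

lemma Hmat_ri_li (GB : Matrix (Fin n) (Fin n) ℤ) (j : Fin 2) (i : Fin n) :
    Hmat n GB (ri n j) (li n i) = 0 := by
  rw [Hmat, Matrix.reindex_apply, Matrix.submatrix_apply, symm_ri, symm_li]; rfl

lemma Hmat_ri_ri (GB : Matrix (Fin n) (Fin n) ℤ) (j j' : Fin 2) :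
    Hmat n GB (ri n j) (ri n j') = !![0, 1; 1, 1] j j' := by
  rw [Hmat, Matrix.reindex_apply, Matrix.submatrix_apply, symm_ri, symm_ri]; rfl

lemma dot_zero_left (M : Matrix (Fin n) (Fin n) ℝ) (v : Fin n → ℝ) :
    (fun _ : Fin n => (0:ℝ)) ⬝ᵥ M.mulVec v = 0 := by
  rw [show (fun _ : Fin n => (0:ℝ)) = 0 from rfl, zero_dotProduct]

lemma dot_zero_right (M : Matrix (Fin n) (Fin n) ℝ) (v : Fin n → ℝ) :
    v ⬝ᵥ M.mulVec (fun _ : Fin n => (0:ℝ)) = 0 := by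
  rw [show (fun _ : Fin n => (0:ℝ)) = 0 from rfl, Matrix.mulVec_zero, dotProduct_zero]

lemma fin2_one_ne_zero : (1 : Fin 2) ≠ 0 := by decide
lemma fin2_zero_ne_one : (0 : Fin 2) ≠ 1 := by decide

lemma gram_entry (GB : Matrix (Fin n) (Fin n) ℤ) (p q : Fin (n + 2)) :
    gramBilinR (gramSum ((2:ℤ) • GB) gramII) (Efun n (Pi.single p 1)) (Efun n (Pi.single q 1))
      = ((Hmat n GB p q : ℤ) : ℝ) := by
  rw [phi_apply]
  rcases index_cases p with ⟨i, rfl⟩ | rfl | rfl <;>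
    rcases index_cases q with ⟨j, rfl⟩ | rfl | rfl <;>
    simp only [Hmat_li_li, Hmat_li_ri, Hmat_ri_li, Hmat_ri_ri, Efun_li, Efun_ri0, Efun_ri1,
      single_li_li, single_li_ri, single_ri_li, single_ri_ri, mul_zero, zero_mul, add_zero,
      zero_add, mul_one, eq_self_iff_true, if_true, fin2_one_ne_zero, fin2_zero_ne_one,
      if_false, ite_false, ite_true, dot_zero_left, dot_zero_right]
  · rw [single_dot, inv2]; ring
  · norm_num
  · norm_num
  · norm_num
  · norm_num
  · norm_num [sqrt2_mul_inv]
  · norm_num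
  · norm_num [inv_mul_sqrt2, sqrt2_mul_inv]
  · norm_num [inv2]

end PLS4
end PLS4f

noncomputable section PLS4g
namespace PLS4

variable {n : ℕ}

lemma spans_M (GB : Matrix (Fin n) (Fin n) ℤ) :
    SpansWithGram (gramBilinR (gramSum ((2:ℤ) • GB) gramII)) (Mlat n) (Hmat n GB) := by
  refine ⟨(Pi.basisFun ℝ (Fin (n+2))).map (Eequiv n), ?_, ?_⟩
  · have hb : ⇑((Pi.basisFun ℝ (Fin (n+2))).map (Eequiv n))
        = fun p => Eequiv n (Pi.single p 1) := by
      funext p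
      rw [Module.Basis.map_apply, Pi.basisFun_apply]
    rw [hb, Mlat]
  · intro i j
    have hb : ((Pi.basisFun ℝ (Fin (n+2))).map (Eequiv n)) i = Efun n (Pi.single i 1) := by
      rw [Module.Basis.map_apply, Pi.basisFun_apply]; rfl
    have hb' : ((Pi.basisFun ℝ (Fin (n+2))).map (Eequiv n)) j = Efun n (Pi.single j 1) := by
      rw [Module.Basis.map_apply, Pi.basisFun_apply]; rfl
    rw [hb, hb', gram_entry]

lemma odd_M (GB : Matrix (Fin n) (Fin n) ℤ) (hunim : IsUnit GB.det) :
    IsOddUnimodularLat (gramBilinR (gramSum ((2:ℤ) • GB) gramII)) (Mlat n) := by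
  constructor
  · exact ⟨n + 2, Hmat n GB, spans_M GB, Hmat_det GB hunim⟩
  · intro hall
    have hmem : Efun n (Pi.single (ri n 1) 1) ∈ Mlat n :=
      Submodule.subset_span ⟨ri n 1, rfl⟩
    obtain ⟨k, hk⟩ := hall _ hmem
    rw [gram_entry, Hmat_ri_ri] at hk
    have h1 : ((!![0, 1; 1, 1] : Matrix (Fin 2) (Fin 2) ℤ) 1 1) = 1 := rfl
    rw [h1] at hk
    have : (1 : ℤ) = 2 * k := by exact_mod_cast hk
    omega

lemma phi_single_li (GB : Matrix (Fin n) (Fin n) ℤ) (x : Fin (n+2) → ℝ) (i : Fin n) :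
    gramBilinR (gramSum ((2:ℤ) • GB) gramII) x (Pi.single (li n i) 1)
      = ((GBᵀ.map (Int.cast : ℤ → ℝ)).mulVec (fun p => 2 * x (li n p))) i := by
  rw [phi_apply]
  have h1 : (fun j => (Pi.single (li n i) (1:ℝ) : Fin (n+2) → ℝ) (li n j))
      = (Pi.single i 1 : Fin n → ℝ) := funext fun j => single_li_li i j
  rw [h1, single_li_ri, single_li_ri, mul_zero, mul_zero, add_zero, add_zero]
  rw [Matrix.mulVec_single]
  simp only [Matrix.mulVec, dotProduct, Matrix.transpose_apply, Matrix.map_apply,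
    Finset.mul_sum, mul_one]
  exact Finset.sum_congr rfl fun j _ => by
    rw [MulOpposite.op_one, one_smul, Matrix.col_apply, Matrix.map_apply]
    ring

lemma phi_single_ri0 (GB : Matrix (Fin n) (Fin n) ℤ) (x : Fin (n+2) → ℝ) :
    gramBilinR (gramSum ((2:ℤ) • GB) gramII) x (Pi.single (ri n 0) 1) = x (ri n 1) := by
  rw [phi_apply]
  have h1 : (fun j => (Pi.single (ri n 0) (1:ℝ) : Fin (n+2) → ℝ) (li n j))
      = (fun _ : Fin n => (0:ℝ)) := funext fun j => single_ri_li 0 j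
  rw [h1, dot_zero_right, single_ri_ri, single_ri_ri]
  norm_num [fin2_one_ne_zero]

lemma phi_single_ri1 (GB : Matrix (Fin n) (Fin n) ℤ) (x : Fin (n+2) → ℝ) :
    gramBilinR (gramSum ((2:ℤ) • GB) gramII) x (Pi.single (ri n 1) 1) = x (ri n 0) := by
  rw [phi_apply]
  have h1 : (fun j => (Pi.single (ri n 1) (1:ℝ) : Fin (n+2) → ℝ) (li n j))
      = (fun _ : Fin n => (0:ℝ)) := funext fun j => single_ri_li 1 j
  rw [h1, dot_zero_right, single_ri_ri, single_ri_ri]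
  norm_num [fin2_zero_ne_one]

lemma sqrt2_mul_sqrt2_mul (t : ℝ) : Real.sqrt 2 * (Real.sqrt 2 * t) = 2 * t := by
  rw [← mul_assoc, sqrt2_mul_self]

lemma dual_std_sub_M (GB : Matrix (Fin n) (Fin n) ℤ) (hunim : IsUnit GB.det) :
    (fun x => Real.sqrt 2 • x) ''
      dualSet (gramBilinR (gramSum ((2:ℤ) • GB) gramII)) (stdLat (n+2) : Set (Fin (n+2) → ℝ))
        ⊆ (Mlat n : Set (Fin (n+2) → ℝ)) := by
  rintro - ⟨x, hx, rfl⟩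
  show Real.sqrt 2 • x ∈ (Mlat n : Set (Fin (n+2) → ℝ))
  have hsingle : ∀ p : Fin (n+2), (Pi.single p (1:ℝ) : Fin (n+2) → ℝ) ∈
      (stdLat (n+2) : Set (Fin (n+2) → ℝ)) := fun p => Submodule.subset_span ⟨p, rfl⟩
  have hli : ∀ i, ∃ k : ℤ, 2 * x (li n i) = (k : ℝ) := by
    apply int_of_mulVec GBᵀ (by rwa [Matrix.det_transpose])
    intro i
    obtain ⟨k, hk⟩ := hx _ (hsingle (li n i))
    exact ⟨k, by rw [← phi_single_li GB x i]; exact hk⟩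
  obtain ⟨k1, hk1⟩ := hx _ (hsingle (ri n 0))
  obtain ⟨k0, hk0⟩ := hx _ (hsingle (ri n 1))
  rw [phi_single_ri0] at hk1
  rw [phi_single_ri1] at hk0
  rw [SetLike.mem_coe, mem_Mlat']
  refine ⟨fun i => ?_, ⟨k0 - k1, ?_⟩, ⟨2 * k1, ?_⟩⟩
  · obtain ⟨k, hk⟩ := hli i
    exact ⟨k, by rw [Pi.smul_apply, smul_eq_mul, sqrt2_mul_sqrt2_mul]; exact hk⟩
  · rw [Pi.smul_apply, Pi.smul_apply, smul_eq_mul, smul_eq_mul, ← mul_sub, ← mul_assoc,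
      inv_mul_sqrt2, one_mul, hk0, hk1]
    push_cast; ring
  · rw [Pi.smul_apply, smul_eq_mul, sqrt2_mul_sqrt2_mul, hk1]
    push_cast; ring

end PLS4
end PLS4g

noncomputable section PLS4h
namespace PLS4

variable {n : ℕ}

lemma inv_two_sqrt2 : (Real.sqrt 2)⁻¹ * 2 = Real.sqrt 2 := by
  have h := sqrt2_mul_self
  field_simp
  rw [sq, h]

lemma smul_pi_eq (c : ℝ) (f : Fin n → ℝ) : c • f = fun i => c * f i := rfl

lemma norm_of_memM (GB : Matrix (Fin n) (Fin n) ℤ) (x : Fin (n+2) → ℝ) (u : Fin n → ℤ)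
    (h1 : ∀ i, Real.sqrt 2 * x (li n i) = (u i : ℝ)) (p q : ℤ)
    (hp : Real.sqrt 2 * x (ri n 0) = (p : ℝ)) (hq : Real.sqrt 2 * x (ri n 1) = (q : ℝ)) :
    gramBilinR (gramSum ((2:ℤ) • GB) gramII) x x
      = ((u ⬝ᵥ GB.mulVec u + p * q : ℤ) : ℝ) := by
  rw [phi_apply]
  have hA : 2 * ((fun i => x (li n i)) ⬝ᵥ (GB.map (Int.cast : ℤ → ℝ)).mulVec
      (fun i => x (li n i))) = ((u ⬝ᵥ GB.mulVec u : ℤ) : ℝ) := by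
    have hu : (fun i => ((u i : ℤ) : ℝ)) = fun i => Real.sqrt 2 * x (li n i) :=
      funext fun i => (h1 i).symm
    rw [← dot_cast GB u u, hu]
    rw [show (fun i => Real.sqrt 2 * x (li n i)) = Real.sqrt 2 • (fun i => x (li n i)) from rfl,
      smul_dotProduct, Matrix.mulVec_smul, dotProduct_smul, smul_eq_mul,
      smul_eq_mul, ← mul_assoc, sqrt2_mul_self]
  have hB : x (ri n 0) * x (ri n 1) + x (ri n 1) * x (ri n 0) = ((p * q : ℤ) : ℝ) := by
    have h2 : (2:ℝ) * (x (ri n 0) * x (ri n 1)) = ((p * q : ℤ) : ℝ) := by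
      calc (2:ℝ) * (x (ri n 0) * x (ri n 1))
          = (Real.sqrt 2 * Real.sqrt 2) * (x (ri n 0) * x (ri n 1)) := by rw [sqrt2_mul_self]
        _ = (Real.sqrt 2 * x (ri n 0)) * (Real.sqrt 2 * x (ri n 1)) := by ring
        _ = ((p : ℝ)) * ((q : ℝ)) := by rw [hp, hq]
        _ = ((p * q : ℤ) : ℝ) := by push_cast; ring
    linarith
  rw [hA, hB]
  push_cast
  ring

/-- the even sublattice of M, concretely -/
def SL0 (n : ℕ) : Set (Fin (n + 2) → ℝ) :=
  {x | (∀ i, ∃ k : ℤ, Real.sqrt 2 * x (li n i) = (k : ℝ)) ∧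
    (∀ j, ∃ k : ℤ, x (ri n j) = Real.sqrt 2 * (k : ℝ))}

lemma even_part (GB : Matrix (Fin n) (Fin n) ℤ) (heven : EvenGram GB) :
    {x | x ∈ Mlat n ∧ ∃ k : ℤ,
      gramBilinR (gramSum ((2:ℤ) • GB) gramII) x x = 2 * (k : ℝ)} = SL0 n := by
  ext x
  simp only [Set.mem_setOf_eq, SL0]
  constructor
  · rintro ⟨hxM, k, hk⟩
    rw [mem_Mlat'] at hxM
    obtain ⟨h1, ⟨m, hm⟩, ⟨q, hq⟩⟩ := hxM
    have hp : Real.sqrt 2 * x (ri n 0) = ((2 * m + q : ℤ) : ℝ) := by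
      have hd : x (ri n 0) - x (ri n 1) = Real.sqrt 2 * (m : ℝ) := by
        rw [← hm, ← mul_assoc, sqrt2_mul_inv, one_mul]
      have : x (ri n 0) = Real.sqrt 2 * (m : ℝ) + x (ri n 1) := by linarith
      rw [this, mul_add, ← mul_assoc, sqrt2_mul_self, hq]
      push_cast; ring
    set u : Fin n → ℤ := fun i => (h1 i).choose with hu
    have hus : ∀ i, Real.sqrt 2 * x (li n i) = ((u i : ℤ) : ℝ) := fun i => (h1 i).choose_spec
    have hnorm := norm_of_memM GB x u hus (2 * m + q) q hp hq
    rw [hnorm] at hk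
    have hZ : u ⬝ᵥ GB.mulVec u + (2 * m + q) * q = 2 * k := by exact_mod_cast hk
    obtain ⟨t, ht⟩ := heven u
    have hpq_even : Even ((2 * m + q) * q) := ⟨k - t, by omega⟩
    have hq_even : Even q := by
      rcases Int.even_mul.mp hpq_even with h | h
      · rcases h with ⟨d, hd⟩
        exact ⟨d - m, by omega⟩
      · exact h
    obtain ⟨c, hc⟩ := hq_even
    refine ⟨h1, fun j => ?_⟩
    have hj : j = 0 ∨ j = 1 := by omega
    rcases hj with rfl | rfl
    · refine ⟨m + c, ?_⟩
      have : Real.sqrt 2 * x (ri n 0) = Real.sqrt 2 * (Real.sqrt 2 * ((m + c : ℤ) : ℝ)) := by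
        rw [sqrt2_mul_sqrt2_mul, hp, hc]; push_cast; ring
      exact mul_left_cancel₀ sqrt2_ne this
    · refine ⟨c, ?_⟩
      have : Real.sqrt 2 * x (ri n 1) = Real.sqrt 2 * (Real.sqrt 2 * ((c : ℤ) : ℝ)) := by
        rw [sqrt2_mul_sqrt2_mul, hq, hc]; push_cast; ring
      exact mul_left_cancel₀ sqrt2_ne this
  · rintro ⟨h1, hr⟩
    obtain ⟨k0, hk0⟩ := hr 0
    obtain ⟨k1, hk1⟩ := hr 1
    set u : Fin n → ℤ := fun i => (h1 i).choose with hu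
    have hus : ∀ i, Real.sqrt 2 * x (li n i) = ((u i : ℤ) : ℝ) := fun i => (h1 i).choose_spec
    have hp : Real.sqrt 2 * x (ri n 0) = ((2 * k0 : ℤ) : ℝ) := by
      rw [hk0, ← mul_assoc, sqrt2_mul_self]; push_cast; ring
    have hq : Real.sqrt 2 * x (ri n 1) = ((2 * k1 : ℤ) : ℝ) := by
      rw [hk1, ← mul_assoc, sqrt2_mul_self]; push_cast; ring
    constructor
    · rw [mem_Mlat']
      refine ⟨h1, ⟨k0 - k1, ?_⟩, ⟨2 * k1, by rw [hq]⟩⟩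
      rw [hk0, hk1,
        show Real.sqrt 2 * (k0:ℝ) - Real.sqrt 2 * (k1:ℝ) = Real.sqrt 2 * ((k0:ℝ) - (k1:ℝ)) by ring,
        ← mul_assoc, inv_mul_sqrt2, one_mul]
      push_cast; ring
    · obtain ⟨t, ht⟩ := heven u
      refine ⟨t + 2 * k0 * k1, ?_⟩
      rw [norm_of_memM GB x u hus (2 * k0) (2 * k1) hp hq]
      push_cast
      rw [show (u ⬝ᵥ GB.mulVec u : ℤ) = t + t from ht]
      push_cast; ring

end PLS4
end PLS4h

noncomputable section PLS4i
namespace PLS4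

variable {n : ℕ}

lemma mem_dualSet {V : Type*} [AddCommGroup V] [Module ℝ V]
    (φ : V →ₗ[ℝ] V →ₗ[ℝ] ℝ) (S : Set V) (x : V) :
    x ∈ dualSet φ S ↔ ∀ y ∈ S, ∃ k : ℤ, φ x y = (k : ℝ) := Iff.rfl

lemma single_ri_mem_SL0 (j : Fin 2) :
    Real.sqrt 2 • (Pi.single (ri n j) 1 : Fin (n+2) → ℝ) ∈ SL0 n := by
  constructor
  · intro i
    exact ⟨0, by rw [Pi.smul_apply, smul_eq_mul, single_ri_li]; simp⟩
  · intro j'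
    refine ⟨if j' = j then 1 else 0, ?_⟩
    rw [Pi.smul_apply, smul_eq_mul, single_ri_ri]
    split_ifs <;> simp

lemma single_li_mem_SL0 (i : Fin n) :
    (Real.sqrt 2)⁻¹ • (Pi.single (li n i) 1 : Fin (n+2) → ℝ) ∈ SL0 n := by
  constructor
  · intro i'
    refine ⟨if i' = i then 1 else 0, ?_⟩
    rw [Pi.smul_apply, smul_eq_mul, single_li_li, ← mul_assoc, sqrt2_mul_inv, one_mul,
      Pi.single_apply]
    split_ifs <;> simp
  · intro j
    exact ⟨0, by rw [Pi.smul_apply, smul_eq_mul, single_li_ri]; simp⟩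

lemma dual_SL0 (GB : Matrix (Fin n) (Fin n) ℤ) (hunim : IsUnit GB.det) :
    dualSet (gramBilinR (gramSum ((2:ℤ) • GB) gramII)) (SL0 n)
      = {x | ∀ p, ∃ k : ℤ, Real.sqrt 2 * x p = (k : ℝ)} := by
  ext x
  rw [mem_dualSet, Set.mem_setOf_eq]
  constructor
  · intro hx
    rw [forall_index]
    constructor
    · apply int_of_mulVec GBᵀ (by rwa [Matrix.det_transpose])
      intro i
      obtain ⟨k, hk⟩ := hx _ (single_li_mem_SL0 i)
      refine ⟨k, ?_⟩
      rw [_root_.map_smul, smul_eq_mul, phi_single_li GB] at hk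
      rw [← hk]
      simp only [Matrix.mulVec, dotProduct, Finset.mul_sum]
      refine Finset.sum_congr rfl fun p _ => ?_
      rw [show (Real.sqrt 2)⁻¹ * ((GBᵀ.map (Int.cast : ℤ → ℝ)) i p * (2 * x (li n p)))
          = (GBᵀ.map (Int.cast : ℤ → ℝ)) i p * ((Real.sqrt 2)⁻¹ * 2 * x (li n p)) by ring,
        inv_two_sqrt2]
    · intro j
      have hj : j = 0 ∨ j = 1 := by omega
      rcases hj with rfl | rfl
      · obtain ⟨k, hk⟩ := hx _ (single_ri_mem_SL0 (n := n) 1)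
        rw [_root_.map_smul, smul_eq_mul, phi_single_ri1 GB] at hk
        exact ⟨k, hk⟩
      · obtain ⟨k, hk⟩ := hx _ (single_ri_mem_SL0 (n := n) 0)
        rw [_root_.map_smul, smul_eq_mul, phi_single_ri0 GB] at hk
        exact ⟨k, hk⟩
  · intro h y hy
    obtain ⟨hy1, hy2⟩ := hy
    obtain ⟨m0, hm0⟩ := hy2 0
    obtain ⟨m1, hm1⟩ := hy2 1
    set u : Fin n → ℤ := fun i => (hy1 i).choose with hu
    have hus : ∀ i, Real.sqrt 2 * y (li n i) = ((u i : ℤ) : ℝ) := fun i => (hy1 i).choose_spec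
    set a : Fin (n+2) → ℤ := fun p => (h p).choose with ha
    have has : ∀ p, Real.sqrt 2 * x p = ((a p : ℤ) : ℝ) := fun p => (h p).choose_spec
    refine ⟨(fun i => a (li n i)) ⬝ᵥ GB.mulVec u + a (ri n 0) * m1 + a (ri n 1) * m0, ?_⟩
    rw [phi_apply]
    have hA : 2 * ((fun i => x (li n i)) ⬝ᵥ (GB.map (Int.cast : ℤ → ℝ)).mulVec
        (fun i => y (li n i))) = (((fun i => a (li n i)) ⬝ᵥ GB.mulVec u : ℤ) : ℝ) := by
      rw [← dot_cast GB]
      rw [show (fun i => ((a (li n i) : ℤ) : ℝ)) = fun i => Real.sqrt 2 * x (li n i) from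
        funext fun i => (has (li n i)).symm]
      rw [show (fun i => ((u i : ℤ) : ℝ)) = fun i => Real.sqrt 2 * y (li n i) from
        funext fun i => (hus i).symm]
      rw [show (fun i => Real.sqrt 2 * x (li n i)) = Real.sqrt 2 • (fun i => x (li n i)) from rfl,
        show (fun i => Real.sqrt 2 * y (li n i)) = Real.sqrt 2 • (fun i => y (li n i)) from rfl,
        smul_dotProduct, Matrix.mulVec_smul, dotProduct_smul, smul_eq_mul,
        smul_eq_mul, ← mul_assoc, sqrt2_mul_self]
    have hB : x (ri n 0) * y (ri n 1) = ((a (ri n 0) * m1 : ℤ) : ℝ) := by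
      rw [hm1, show x (ri n 0) * (Real.sqrt 2 * (m1 : ℝ))
        = (Real.sqrt 2 * x (ri n 0)) * (m1 : ℝ) by ring, has]
      push_cast; ring
    have hC : x (ri n 1) * y (ri n 0) = ((a (ri n 1) * m0 : ℤ) : ℝ) := by
      rw [hm0, show x (ri n 1) * (Real.sqrt 2 * (m0 : ℝ))
        = (Real.sqrt 2 * x (ri n 1)) * (m0 : ℝ) by ring, has]
      push_cast; ring
    rw [hA, hB, hC]
    push_cast; ring

end PLS4
end PLS4i


/-- In the real quadratic space `(V, φ)` containing `A = B(2) ⊕ II_{1,1}`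
as the standard lattice, let `Ahat` be the unique odd unimodular full-rank lattice
containing `√2·A*`.  Then `A = √2·((Ahatᵉ)*)`, where `Ahatᵉ` is the even sublattice
of `Ahat`. -/
theorem period_lattice_stmt4 {n : ℕ} (GB : Matrix (Fin n) (Fin n) ℤ)
    (hsymm : GB.IsSymm) (heven : EvenGram GB) (hunim : IsUnit GB.det)
    (φ : (Fin (n + 2) → ℝ) →ₗ[ℝ] (Fin (n + 2) → ℝ) →ₗ[ℝ] ℝ)
    (hφ : φ = gramBilinR (gramSum ((2 : ℤ) • GB) gramII))
    (Ahat : Submodule ℤ (Fin (n + 2) → ℝ))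
    (hAhat : IsOddUnimodularLat φ Ahat)
    (hcont : (fun x => Real.sqrt 2 • x) '' dualSet φ (stdLat (n + 2) : Set (Fin (n + 2) → ℝ))
      ⊆ (Ahat : Set (Fin (n + 2) → ℝ)))
    (huniq : ∀ M : Submodule ℤ (Fin (n + 2) → ℝ), IsOddUnimodularLat φ M →
      (fun x => Real.sqrt 2 • x) '' dualSet φ (stdLat (n + 2) : Set (Fin (n + 2) → ℝ))
        ⊆ (M : Set (Fin (n + 2) → ℝ)) → M = Ahat) :
    (stdLat (n + 2) : Set (Fin (n + 2) → ℝ)) =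
      (fun x => Real.sqrt 2 • x) ''
        dualSet φ {x | x ∈ Ahat ∧ ∃ k : ℤ, φ x x = 2 * (k : ℝ)} := by
  subst hφ
  have hM : PLS4.Mlat n = Ahat := huniq (PLS4.Mlat n) (PLS4.odd_M GB hunim) (PLS4.dual_std_sub_M GB hunim)
  rw [← hM]
  rw [show {x | x ∈ PLS4.Mlat n ∧ ∃ k : ℤ,
      gramBilinR (gramSum ((2:ℤ) • GB) gramII) x x = 2 * (k : ℝ)} = PLS4.SL0 n from
    PLS4.even_part GB heven]
  rw [PLS4.dual_SL0 GB hunim]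
  ext z
  constructor
  · intro hz
    rw [SetLike.mem_coe, PLS4.mem_stdLat] at hz
    refine ⟨(Real.sqrt 2)⁻¹ • z, ?_, ?_⟩
    · intro p
      obtain ⟨k, hk⟩ := hz p
      refine ⟨k, ?_⟩
      rw [Pi.smul_apply, smul_eq_mul, ← mul_assoc, PLS4.sqrt2_mul_inv, one_mul]
      exact hk
    · show Real.sqrt 2 • (Real.sqrt 2)⁻¹ • z = z
      rw [smul_smul, PLS4.sqrt2_mul_inv, one_smul]
  · rintro ⟨x, hxD, rfl⟩
    show Real.sqrt 2 • x ∈ (stdLat (n + 2) : Set (Fin (n + 2) → ℝ))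
    rw [SetLike.mem_coe, PLS4.mem_stdLat]
    intro p
    obtain ⟨k, hk⟩ := hxD p
    exact ⟨k, by rw [Pi.smul_apply, smul_eq_mul]; exact hk⟩
end PLS4
end

section
/- Let B be an even unimodular ℤ-lattice, let (V, φ) be the real quadratic space containing A = B(2) ⊕ II_{1,1} as a full-rank lattice, and let Â ⊂ V be the full-rank lattice isometric to B ⊕ I_{1,1} associated to A (namely the unique odd unimodular lattice in (V, φ) containing √2·A*). Then the map v ↦ √2·v is a bijection from the set of vectors of Â of norm −1 onto the set of vectors of A of norm −2. -/
open Matrix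

section Aux

open Matrix

variable {p q N : ℕ}

lemma gramSum_mul (A C : Matrix (Fin p) (Fin p) ℤ) (B D : Matrix (Fin q) (Fin q) ℤ) :
    gramSum A B * gramSum C D = gramSum (A * C) (B * D) := by
  simp [gramSum, Matrix.reindex_apply, Matrix.submatrix_mul_equiv,
    Matrix.fromBlocks_multiply]

lemma gramSum_transpose (A : Matrix (Fin p) (Fin p) ℤ) (B : Matrix (Fin q) (Fin q) ℤ) :
    (gramSum A B)ᵀ = gramSum Aᵀ Bᵀ := by
  simp [gramSum, Matrix.transpose_submatrix, Matrix.fromBlocks_transpose]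

lemma gramSum_one : gramSum (1 : Matrix (Fin p) (Fin p) ℤ) (1 : Matrix (Fin q) (Fin q) ℤ) = 1 := by
  simp [gramSum, Matrix.fromBlocks_one]

lemma gramSum_smul (k : ℤ) (A : Matrix (Fin p) (Fin p) ℤ) (B : Matrix (Fin q) (Fin q) ℤ) :
    k • gramSum A B = gramSum (k • A) (k • B) := by
  ext i j
  simp only [Matrix.smul_apply, gramSum, Matrix.reindex_apply, Matrix.submatrix_apply]
  rcases finSumFinEquiv.symm i with a | a <;> rcases finSumFinEquiv.symm j with b | b <;>
    simp only [Matrix.fromBlocks, Matrix.smul_apply, Sum.elim_inl, Sum.elim_inr,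
      Matrix.of_apply, Matrix.zero_apply, smul_eq_mul, smul_zero, mul_zero]

/-- coordinatewise cast of an integer vector to a real vector -/
def cV {N : ℕ} (u : Fin N → ℤ) : Fin N → ℝ := fun i => (u i : ℝ)

lemma cV_mulVec (P : Matrix (Fin N) (Fin N) ℤ) (u : Fin N → ℤ) :
    (P.map (Int.cast : ℤ → ℝ)) *ᵥ (cV u) = cV (P *ᵥ u) := by
  funext i
  have := (RingHom.map_mulVec (Int.castRingHom ℝ) P u i).symm
  exact this

lemma cV_dot (G : Matrix (Fin N) (Fin N) ℤ) (u v : Fin N → ℤ) :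
    cV u ⬝ᵥ (G.map (Int.cast : ℤ → ℝ)) *ᵥ (cV v) = ((u ⬝ᵥ G *ᵥ v : ℤ) : ℝ) := by
  rw [cV_mulVec]
  simp [cV, dotProduct]

end Aux
section Aux2

open Matrix

variable {p q N : ℕ}

/-- coordinatewise cast as a ℤ-linear map -/
def cVhom (N : ℕ) : (Fin N → ℤ) →ₗ[ℤ] (Fin N → ℝ) where
  toFun := cV
  map_add' x y := by funext i; simp [cV]
  map_smul' c x := by
    funext i
    simp only [cV, Pi.smul_apply, smul_eq_mul, RingHom.id_apply, zsmul_eq_mul]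
    push_cast
    ring

lemma stdLat_eq_range (N : ℕ) : stdLat N = LinearMap.range (cVhom N) := by
  apply le_antisymm
  · rw [stdLat, Submodule.span_le]
    rintro x ⟨i, rfl⟩
    exact ⟨Pi.single i 1, by funext j; simp [cVhom, cV, Pi.single_apply]⟩
  · rintro x ⟨m, rfl⟩
    have : (cVhom N) m = ∑ i, m i • (Pi.single i (1 : ℝ) : Fin N → ℝ) := by
      funext j
      simp [cVhom, cV, Finset.sum_apply, Pi.single_apply]
    rw [this]
    exact Submodule.sum_mem _ fun i _ =>
      Submodule.smul_mem _ (m i) (Submodule.subset_span ⟨i, rfl⟩)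

lemma mem_stdLat_iff {N : ℕ} (x : Fin N → ℝ) : x ∈ stdLat N ↔ ∃ m, x = cV m := by
  rw [stdLat_eq_range]
  constructor
  · rintro ⟨m, rfl⟩; exact ⟨m, rfl⟩
  · rintro ⟨m, rfl⟩; exact ⟨m, rfl⟩

lemma dot_reindex (M : Matrix (Fin p ⊕ Fin q) (Fin p ⊕ Fin q) ℤ) (v w : Fin (p + q) → ℤ) :
    v ⬝ᵥ (Matrix.reindex finSumFinEquiv finSumFinEquiv M) *ᵥ w
      = (v ∘ finSumFinEquiv) ⬝ᵥ M *ᵥ (w ∘ finSumFinEquiv) := by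
  rw [Matrix.reindex_apply, Matrix.submatrix_mulVec_equiv]
  simp only [Equiv.symm_symm]
  exact dotProduct_comp_equiv_symm _ _ _

lemma quad_decomp (GB : Matrix (Fin p) (Fin p) ℤ) (m : Fin (p + 2) → ℤ) :
    m ⬝ᵥ (gramSum ((2 : ℤ) • GB) gramII) *ᵥ m
      = 2 * ((m ∘ finSumFinEquiv ∘ Sum.inl) ⬝ᵥ GB *ᵥ (m ∘ finSumFinEquiv ∘ Sum.inl))
        + 2 * (m (finSumFinEquiv (Sum.inr 0)) * m (finSumFinEquiv (Sum.inr 1))) := by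
  rw [gramSum, dot_reindex]
  have hd : m ∘ finSumFinEquiv
      = Sum.elim (m ∘ finSumFinEquiv ∘ Sum.inl) (m ∘ finSumFinEquiv ∘ Sum.inr) := by
    funext x; cases x <;> rfl
  rw [hd, Matrix.fromBlocks_mulVec, Matrix.zero_mulVec, Matrix.zero_mulVec, add_zero, zero_add,
    sumElim_dotProduct_sumElim]
  congr 1
  · rw [Matrix.smul_mulVec, dotProduct_smul]
    simp [smul_eq_mul]
  · simp [gramII, Matrix.mulVec, dotProduct, Fin.sum_univ_two]
    ring

lemma two_by_two_gram : !![(1:ℤ),1;1,-1]ᵀ * gramII * !![(1:ℤ),1;1,-1] = (2:ℤ) • !![(1:ℤ),0;0,-1] := by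
  decide

lemma two_by_two_inv : gramII * !![(1:ℤ),1;1,-1] * !![(1:ℤ),1;-1,1] = (2:ℤ) • 1 := by
  decide

end Aux2
section Aux3

open Matrix

variable {N : ℕ}

lemma conj_dot (P A : Matrix (Fin N) (Fin N) ℤ) (x y : Fin N → ℤ) :
    (P *ᵥ x) ⬝ᵥ A *ᵥ (P *ᵥ y) = x ⬝ᵥ (Pᵀ * A * P) *ᵥ y := by
  rw [← Matrix.vecMul_transpose, Matrix.dotProduct_mulVec, Matrix.vecMul_vecMul,
    ← Matrix.dotProduct_mulVec, Matrix.mulVec_mulVec]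

lemma sum_smul_single (c : Fin N → ℤ) : (∑ i, c i • Pi.single i (1 : ℤ)) = c := by
  funext j
  simp [Finset.sum_apply, Pi.single_apply]

lemma gramSum_det {p q : ℕ} (A : Matrix (Fin p) (Fin p) ℤ) (B : Matrix (Fin q) (Fin q) ℤ) :
    (gramSum A B).det = A.det * B.det := by
  rw [gramSum, Matrix.det_reindex_self, Matrix.det_fromBlocks_zero₂₁]

end Aux3

section Aux4

open Matrix

lemma gramSum_mulVec {p q : ℕ} (A : Matrix (Fin p) (Fin p) ℤ) (B : Matrix (Fin q) (Fin q) ℤ)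
    (x : Fin p → ℤ) (y : Fin q → ℤ) :
    gramSum A B *ᵥ (Sum.elim x y ∘ finSumFinEquiv.symm)
      = Sum.elim (A *ᵥ x) (B *ᵥ y) ∘ ⇑finSumFinEquiv.symm := by
  rw [gramSum, Matrix.reindex_apply, Matrix.submatrix_mulVec_equiv]
  simp only [Equiv.symm_symm]
  have h : (Sum.elim x y ∘ ⇑finSumFinEquiv.symm) ∘ ⇑finSumFinEquiv = Sum.elim x y := by
    funext z; simp [Function.comp, Equiv.symm_apply_apply]
  rw [h, Matrix.fromBlocks_mulVec, Matrix.zero_mulVec, Matrix.zero_mulVec, add_zero, zero_add,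
    Sum.elim_comp_inl, Sum.elim_comp_inr]

lemma sum_elim_comp_symm {p q : ℕ} (v : Fin (p + q) → ℤ) :
    Sum.elim (v ∘ finSumFinEquiv ∘ Sum.inl) (v ∘ finSumFinEquiv ∘ Sum.inr)
      ∘ ⇑finSumFinEquiv.symm = v := by
  funext i
  simp only [Function.comp_apply]
  rcases h : finSumFinEquiv.symm i with x | x
  · have hi : finSumFinEquiv (Sum.inl x) = i := by rw [← h]; exact finSumFinEquiv.apply_symm_apply i
    simp [hi]
  · have hi : finSumFinEquiv (Sum.inr x) = i := by rw [← h]; exact finSumFinEquiv.apply_symm_apply i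
    simp [hi]

end Aux4
/-- In the real quadratic space `(V, φ)` containing `A = B(2) ⊕ II_{1,1}`
as the standard lattice, let `Ahat` be the unique odd unimodular full-rank lattice in `(V, φ)`
containing `√2·A*` (the lattice isometric to `B ⊕ I_{1,1}` associated to `A`).
Then `v ↦ √2·v` is a bijection from the vectors of `Ahat` of norm `-1` onto the
vectors of `A` of norm `-2`. -/
theorem period_lattice_stmt6 {n : ℕ} (GB : Matrix (Fin n) (Fin n) ℤ)
    (hsymm : GB.IsSymm) (heven : EvenGram GB) (hunim : IsUnit GB.det)
    (φ : (Fin (n + 2) → ℝ) →ₗ[ℝ] (Fin (n + 2) → ℝ) →ₗ[ℝ] ℝ)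
    (hφ : φ = gramBilinR (gramSum ((2 : ℤ) • GB) gramII))
    (Ahat : Submodule ℤ (Fin (n + 2) → ℝ))
    (hAhat : IsOddUnimodularLat φ Ahat)
    (hcont : (fun x => Real.sqrt 2 • x) '' dualSet φ (stdLat (n + 2) : Set (Fin (n + 2) → ℝ))
      ⊆ (Ahat : Set (Fin (n + 2) → ℝ)))
    (huniq : ∀ M : Submodule ℤ (Fin (n + 2) → ℝ), IsOddUnimodularLat φ M →
      (fun x => Real.sqrt 2 • x) '' dualSet φ (stdLat (n + 2) : Set (Fin (n + 2) → ℝ))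
        ⊆ (M : Set (Fin (n + 2) → ℝ)) → M = Ahat) :
    Set.BijOn (fun v => Real.sqrt 2 • v)
      {v : Fin (n + 2) → ℝ | v ∈ Ahat ∧ φ v v = -1}
      {v : Fin (n + 2) → ℝ | v ∈ stdLat (n + 2) ∧ φ v v = -2} := by
  classical
  set s : ℝ := Real.sqrt 2 with hs
  have hs2 : s * s = 2 := Real.mul_self_sqrt (by norm_num)
  have hsne : s ≠ 0 := by
    intro h; rw [h] at hs2; norm_num at hs2
  set G : Matrix (Fin (n + 2)) (Fin (n + 2)) ℤ := gramSum ((2 : ℤ) • GB) gramII with hG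
  have hφapp : ∀ x y : Fin (n + 2) → ℝ,
      φ x y = x ⬝ᵥ (G.map (Int.cast : ℤ → ℝ)) *ᵥ y := by
    intro x y; rw [hφ]; rfl
  have hφcV : ∀ u v : Fin (n + 2) → ℤ,
      φ (cV u) (cV v) = ((u ⬝ᵥ G *ᵥ v : ℤ) : ℝ) := by
    intro u v; rw [hφapp, cV_dot]
  -- the integer matrices
  set Qm : Matrix (Fin 2) (Fin 2) ℤ := !![1, 1; 1, -1] with hQm
  set P : Matrix (Fin (n + 2)) (Fin (n + 2)) ℤ := gramSum 1 Qm with hP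
  haveI iGB : Invertible GB := GB.invertibleOfIsUnitDet hunim
  set R : Matrix (Fin (n + 2)) (Fin (n + 2)) ℤ := gramSum (⅟GB) !![1, 1; -1, 1] with hR
  set H : Matrix (Fin (n + 2)) (Fin (n + 2)) ℤ := gramSum GB !![1, 0; 0, -1] with hH
  have key1 : Pᵀ * G * P = (2 : ℤ) • H := by
    rw [hP, hG, hH, gramSum_transpose, gramSum_mul, gramSum_mul, gramSum_smul,
      Matrix.transpose_one, Matrix.one_mul, Matrix.mul_one, hQm, two_by_two_gram]
  have key2 : G * P * R = (2 : ℤ) • (1 : Matrix (Fin (n + 2)) (Fin (n + 2)) ℤ) := by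
    have h1 : ((2 : ℤ) • (1 : Matrix (Fin (n + 2)) (Fin (n + 2)) ℤ))
        = gramSum ((2 : ℤ) • (1 : Matrix (Fin n) (Fin n) ℤ))
          ((2 : ℤ) • (1 : Matrix (Fin 2) (Fin 2) ℤ)) := by
      rw [← gramSum_smul, gramSum_one]
    rw [hP, hG, hR, gramSum_mul, gramSum_mul, Matrix.mul_one, smul_mul_assoc,
      mul_invOf_self, hQm, two_by_two_inv, h1]
  have hGsymm : Gᵀ = G := by
    rw [hG, gramSum_transpose, Matrix.transpose_smul, hsymm.eq,
      show gramIIᵀ = gramII from by decide]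
  -- real basis
  have hdetP : IsUnit ((P.map (Int.cast : ℤ → ℝ)).det) := by
    have h0 : (P.map (Int.cast : ℤ → ℝ)).det = ((P.det : ℤ) : ℝ) := by
      rw [show P.map (Int.cast : ℤ → ℝ) = (Int.castRingHom ℝ).mapMatrix P from rfl,
        ← RingHom.map_det]
      rfl
    have hq : Qm.det = -2 := by rw [hQm]; decide
    rw [h0, hP, gramSum_det, hq, Matrix.det_one]
    simp only [isUnit_iff_ne_zero]
    norm_num
  haveI iP : Invertible ((1 / s) • P.map (Int.cast : ℤ → ℝ)) := by
    apply Matrix.invertibleOfIsUnitDet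
    rw [Matrix.det_smul]
    exact (IsUnit.pow _ (isUnit_iff_ne_zero.2 (by simp [hsne]))).mul hdetP
  set bas : Module.Basis (Fin (n + 2)) ℝ (Fin (n + 2) → ℝ) :=
    (Pi.basisFun ℝ (Fin (n + 2))).map
      (Matrix.toLinearEquiv' ((1 / s) • P.map (Int.cast : ℤ → ℝ)) iP) with hbas
  have hbapp : ∀ i, bas i = (1 / s) • cV (P *ᵥ Pi.single i 1) := by
    intro i
    rw [hbas, Module.Basis.map_apply, Pi.basisFun_apply]
    have : (Matrix.toLinearEquiv' ((1 / s) • P.map (Int.cast : ℤ → ℝ)) iP) (Pi.single i 1)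
        = ((1 / s) • P.map (Int.cast : ℤ → ℝ)) *ᵥ (Pi.single i 1) := rfl
    rw [this, Matrix.smul_mulVec]
    congr 1
    rw [show (Pi.single i 1 : Fin (n + 2) → ℝ) = cV (Pi.single i 1) by
      funext j; simp [cV, Pi.single_apply]]
    rw [cV_mulVec]
  set M : Submodule ℤ (Fin (n + 2) → ℝ) := Submodule.span ℤ (Set.range ⇑bas) with hM
  have hsum : ∀ c : Fin (n + 2) → ℤ, (∑ i, c i • bas i) = (1 / s) • cV (P *ᵥ c) := by
    intro c
    set Lm : (Fin (n + 2) → ℤ) →ₗ[ℤ] (Fin (n + 2) → ℝ) :=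
      (cVhom (n + 2)).comp (Matrix.mulVecLin P) with hLm
    have h1 : ∀ i, c i • bas i = (1 / s) • Lm (c i • Pi.single i 1) := by
      intro i
      rw [hbapp i, smul_comm]
      congr 1
      rw [_root_.map_smul]
      rfl
    calc (∑ i, c i • bas i) = ∑ i, (1 / s) • Lm (c i • Pi.single i 1) :=
          Finset.sum_congr rfl fun i _ => h1 i
      _ = (1 / s) • Lm (∑ i, c i • Pi.single i 1) := by rw [← Finset.smul_sum, ← map_sum]
      _ = (1 / s) • cV (P *ᵥ c) := by rw [sum_smul_single]; rfl
  have harith : ∀ z : ℝ, (1 / s) * ((1 / s) * (2 * z)) = z := by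
    intro z
    rw [show (1 / s) * ((1 / s) * (2 * z)) = (2 / (s * s)) * z by ring, hs2]
    norm_num
  have hgram : ∀ i j, φ (bas i) (bas j) = ((H i j : ℤ) : ℝ) := by
    intro i j
    rw [hbapp i, hbapp j]
    simp only [_root_.map_smul, LinearMap.smul_apply, smul_eq_mul]
    rw [hφcV, conj_dot, key1]
    have hd : (Pi.single i (1 : ℤ)) ⬝ᵥ ((2 : ℤ) • H) *ᵥ (Pi.single j 1) = 2 * H i j := by
      rw [Matrix.mulVec_single, single_dotProduct]
      simp [Matrix.smul_apply, -zsmul_eq_mul]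
    rw [hd]
    push_cast
    exact harith _
  have hspans : SpansWithGram φ M H := ⟨bas, hM, hgram⟩
  have detH : IsUnit H.det := by
    rw [hH, gramSum_det, show (!![(1:ℤ), 0; 0, -1]).det = -1 from by decide]
    exact hunim.mul (IsUnit.neg isUnit_one)
  have hodd : ¬ ∀ x ∈ M, ∃ k : ℤ, φ x x = 2 * (k : ℝ) := by
    intro hall
    set i₀ : Fin (n + 2) := finSumFinEquiv (Sum.inr 1) with hi₀
    have hH0 : H i₀ i₀ = -1 := by
      rw [hH, hi₀]
      simp only [gramSum, Matrix.reindex_apply, Matrix.submatrix_apply,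
        Equiv.symm_apply_apply, Matrix.fromBlocks_apply₂₂]
      decide
    obtain ⟨k, hk⟩ := hall (bas i₀) (Submodule.subset_span ⟨i₀, rfl⟩)
    rw [hgram i₀ i₀, hH0] at hk
    have h2 : (2 * k : ℤ) = -1 := by exact_mod_cast hk.symm
    omega
  have hOddUni : IsOddUnimodularLat φ M := ⟨⟨n + 2, H, hspans, detH⟩, hodd⟩
  -- injectivity of the real Gram matrix
  have hGdet : G.det ≠ 0 := by
    have : G.det = 2 ^ n * GB.det * (-1) := by
      rw [hG, gramSum_det, Matrix.det_smul, show gramII.det = -1 from by decide,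
        Fintype.card_fin]
    rw [this]
    exact mul_ne_zero (mul_ne_zero (pow_ne_zero _ two_ne_zero) hunim.ne_zero) (by norm_num)
  have hinj : Function.Injective
      (fun v : Fin (n + 2) → ℝ => (G.map (Int.cast : ℤ → ℝ)) *ᵥ v) := by
    have hd : ((G.map (Int.cast : ℤ → ℝ)).det) ≠ 0 := by
      rw [show G.map (Int.cast : ℤ → ℝ) = (Int.castRingHom ℝ).mapMatrix G from rfl,
        ← RingHom.map_det]
      simpa using hGdet
    haveI := Matrix.invertibleOfIsUnitDet _ (isUnit_iff_ne_zero.2 hd)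
    exact Matrix.mulVec_injective_of_invertible _
  -- M contains √2 · A*
  have hcontM : (fun x => s • x) '' dualSet φ (stdLat (n + 2) : Set (Fin (n + 2) → ℝ))
      ⊆ (M : Set (Fin (n + 2) → ℝ)) := by
    rintro x ⟨y, hy, rfl⟩
    choose m hm using fun i => hy (Pi.single i (1 : ℝ)) (Submodule.subset_span ⟨i, rfl⟩)
    have hGsym' : ∀ a b, G a b = G b a := by
      intro a b
      conv_lhs => rw [← hGsymm]
      rw [Matrix.transpose_apply]
    have hGy : (G.map (Int.cast : ℤ → ℝ)) *ᵥ y = cV m := by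
      funext i
      have h1 : φ y (Pi.single i 1) = ((G.map (Int.cast : ℤ → ℝ)) *ᵥ y) i := by
        rw [hφapp, Matrix.mulVec_single]
        simp only [dotProduct, Matrix.mulVec, Matrix.map_apply, mul_one]
        exact Finset.sum_congr rfl fun r _ => by rw [hGsym' i r]; simp [Matrix.col]; ring
      rw [← h1, hm i]
      rfl
    have hrep : s • y = ∑ i, (R *ᵥ m) i • bas i := by
      rw [hsum]
      apply hinj
      show (G.map (Int.cast : ℤ → ℝ)) *ᵥ (s • y)
        = (G.map (Int.cast : ℤ → ℝ)) *ᵥ ((1 / s) • cV (P *ᵥ (R *ᵥ m)))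
      rw [Matrix.mulVec_smul, Matrix.mulVec_smul, hGy, cV_mulVec, Matrix.mulVec_mulVec,
        Matrix.mulVec_mulVec, key2]
      have h2 : ((2 : ℤ) • (1 : Matrix (Fin (n + 2)) (Fin (n + 2)) ℤ)) *ᵥ m = (2 : ℤ) • m := by
        rw [Matrix.smul_mulVec, Matrix.one_mulVec]
      rw [h2]
      funext j
      show s * (m j : ℝ) = (1 / s) * ((((2 : ℤ) • m) j : ℤ) : ℝ)
      have : (((2 : ℤ) • m) j : ℝ) = 2 * (m j : ℝ) := by push_cast; simp
      rw [this]
      field_simp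
      linear_combination (m j : ℝ) * hs2
    show s • y ∈ M
    rw [hrep]
    exact Submodule.sum_mem M fun i _ => Submodule.smul_mem _ _ (Submodule.subset_span ⟨i, rfl⟩)
  have hMA : M = Ahat := huniq M hOddUni hcontM
  rw [← hMA]
  -- the bijection
  refine ⟨?_, ?_, ?_⟩
  · -- MapsTo
    rintro v ⟨hv, hvn⟩
    obtain ⟨c, hc⟩ := (Submodule.mem_span_range_iff_exists_fun ℤ).1 hv
    constructor
    · show s • v ∈ stdLat (n + 2)
      rw [← hc, hsum, smul_smul, mul_one_div, div_self hsne, one_smul]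
      exact (mem_stdLat_iff _).2 ⟨P *ᵥ c, rfl⟩
    · show φ (s • v) (s • v) = -2
      simp only [_root_.map_smul, LinearMap.smul_apply, smul_eq_mul]
      rw [hvn]
      linear_combination -hs2
  · -- InjOn
    intro a _ b _ h
    exact smul_right_injective (Fin (n + 2) → ℝ) hsne h
  · -- SurjOn
    rintro w ⟨hw1, hw2⟩
    obtain ⟨m, rfl⟩ := (mem_stdLat_iff w).1 hw1
    have hint : (m ⬝ᵥ G *ᵥ m) = -2 := by
      rw [hφcV] at hw2
      exact_mod_cast hw2
    rw [hG, quad_decomp] at hint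
    obtain ⟨t, ht⟩ := heven (m ∘ finSumFinEquiv ∘ Sum.inl)
    rw [ht] at hint
    set b0 := m (finSumFinEquiv (Sum.inr 0)) with hb0
    set b1 := m (finSumFinEquiv (Sum.inr 1)) with hb1
    have hoddp : Odd (b0 * b1) := ⟨-1 - t, by linarith⟩
    rw [Int.odd_mul] at hoddp
    obtain ⟨⟨k0, hk0⟩, ⟨k1, hk1⟩⟩ := hoddp
    refine ⟨(1 / s) • cV m, ⟨?_, ?_⟩, ?_⟩
    · -- membership in M
      apply (Submodule.mem_span_range_iff_exists_fun ℤ).2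
      refine ⟨(Sum.elim (m ∘ finSumFinEquiv ∘ Sum.inl) ![k0 + k1 + 1, k0 - k1])
        ∘ finSumFinEquiv.symm, ?_⟩
      rw [hsum]
      congr 1
      have hQv : Qm *ᵥ ![k0 + k1 + 1, k0 - k1] = ![b0, b1] := by
        funext j
        fin_cases j <;>
          simp [hQm, Matrix.mulVec, dotProduct, Fin.sum_univ_two] <;> omega
      have hPc : P *ᵥ ((Sum.elim (m ∘ finSumFinEquiv ∘ Sum.inl) ![k0 + k1 + 1, k0 - k1])
          ∘ finSumFinEquiv.symm) = m := by
        rw [hP, gramSum_mulVec, Matrix.one_mulVec, hQv]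
        have hb : (![b0, b1] : Fin 2 → ℤ) = m ∘ finSumFinEquiv ∘ Sum.inr := by
          funext j; fin_cases j <;> rfl
        rw [hb, sum_elim_comp_symm]
      rw [hPc]
    · -- norm is -1
      show φ ((1 / s) • cV m) ((1 / s) • cV m) = -1
      simp only [_root_.map_smul, LinearMap.smul_apply, smul_eq_mul]
      rw [hw2]
      linarith [harith (-1)]
    · -- maps to w
      show s • ((1 / s) • cV m) = cV m
      rw [smul_smul, mul_one_div, div_self hsne, one_smul]
end

section
/- For every vector v of I_{2,10} with ⟨v,v⟩ = −1, the orthogonal complement v⊥ = {x ∈ I_{2,10} : ⟨x,v⟩ = 0}, with the restricted bilinear form, is isometric to I_{2,9}. -/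
open Matrix

section Stmt8Aux


def dd : Fin 12 → ℤ := fun i => if (i : ℕ) < 2 then 1 else -1
def bform (x y : Fin 12 → ℤ) : ℤ := ∑ i, x i * y i * dd i

lemma bform_expand (x y : Fin 12 → ℤ) : bform x y = x 0 * y 0 + x 1 * y 1 - x 2 * y 2 - x 3 * y 3
    - x 4 * y 4 - x 5 * y 5 - x 6 * y 6 - x 7 * y 7 - x 8 * y 8 - x 9 * y 9 - x 10 * y 10
    - x 11 * y 11 := by
  simp [bform, Fin.sum_univ_succ, dd,
    show (Fin.succ 2 : Fin 12) = 3 from rfl,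
    show ((Fin.succ 2).succ : Fin 12) = 4 from rfl,
    show ((Fin.succ 2).succ.succ : Fin 12) = 5 from rfl,
    show ((Fin.succ 2).succ.succ.succ : Fin 12) = 6 from rfl,
    show ((Fin.succ 2).succ.succ.succ.succ : Fin 12) = 7 from rfl,
    show ((Fin.succ 2).succ.succ.succ.succ.succ : Fin 12) = 8 from rfl,
    show ((Fin.succ 2).succ.succ.succ.succ.succ.succ : Fin 12) = 9 from rfl,
    show ((Fin.succ 2).succ.succ.succ.succ.succ.succ.succ : Fin 12) = 10 from rfl,
    show ((Fin.succ 2).succ.succ.succ.succ.succ.succ.succ.succ : Fin 12) = 11 from rfl]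
  ring

lemma bform_symm (x y : Fin 12 → ℤ) : bform x y = bform y x := by
  unfold bform; exact Finset.sum_congr rfl fun i _ => by ring

lemma bform_sub_mul (x y w z : Fin 12 → ℤ) (a b : ℤ) :
    bform (fun i => x i - a * w i) (fun i => y i - b * z i) =
      bform x y - b * bform x z - a * bform w y + a * b * bform w z := by
  unfold bform
  rw [Finset.mul_sum, Finset.mul_sum, Finset.mul_sum, ← Finset.sum_sub_distrib,
    ← Finset.sum_sub_distrib, ← Finset.sum_add_distrib]
  exact Finset.sum_congr rfl fun i _ => by ring

lemma bform_add_left (x y w : Fin 12 → ℤ) :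
    bform (x + y) w = bform x w + bform y w := by
  unfold bform; rw [← Finset.sum_add_distrib]
  exact Finset.sum_congr rfl fun j _ => by
    show (x j + y j) * w j * dd j = _; ring

lemma bform_smul_left (a : ℤ) (x w : Fin 12 → ℤ) :
    bform (a • x) w = a * bform x w := by
  unfold bform; rw [Finset.mul_sum]
  exact Finset.sum_congr rfl fun j _ => by
    show (a * x j) * w j * dd j = _; ring

def IsIsom (g : (Fin 12 → ℤ) ≃ₗ[ℤ] (Fin 12 → ℤ)) : Prop :=
  ∀ x y, bform (g x) (g y) = bform x y

lemma IsIsom.trans {g h : (Fin 12 → ℤ) ≃ₗ[ℤ] (Fin 12 → ℤ)} (hg : IsIsom g) (hh : IsIsom h) :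
    IsIsom (g.trans h) := fun x y => by
  simpa using (hh (g x) (g y)).trans (hg x y)

def reflMap (w : Fin 12 → ℤ) (c : ℤ) : (Fin 12 → ℤ) →ₗ[ℤ] (Fin 12 → ℤ) where
  toFun x := fun i => x i - c * bform x w * w i
  map_add' x y := by
    funext i
    show (x + y) i - c * bform (x + y) w * w i = _
    rw [bform_add_left]
    show x i + y i - _ = (x i - c * bform x w * w i) + (y i - c * bform y w * w i)
    ring
  map_smul' a x := by
    funext i
    show (a • x) i - c * bform (a • x) w * w i = _
    rw [bform_smul_left]
    show a * x i - _ = a * (x i - c * bform x w * w i)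
    ring

lemma reflMap_invol (w : Fin 12 → ℤ) (c : ℤ) (hc : c * bform w w = 2) :
    Function.Involutive (reflMap w c) := by
  intro x
  have h1 : bform (fun i => x i - c * bform x w * w i) w =
      bform x w - c * bform x w * bform w w := by
    have h := bform_sub_mul x w w w (c * bform x w) 0
    simpa using h
  show (fun i => _) = x
  funext i
  simp only [reflMap, LinearMap.coe_mk, AddHom.coe_mk, h1]
  have h2 : c * (bform x w - c * bform x w * bform w w) = -(c * bform x w) := by
    linear_combination (-(c * bform x w)) * hc
  rw [h2]; ring

def reflEquiv (w : Fin 12 → ℤ) (c : ℤ) (hc : c * bform w w = 2) :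
    (Fin 12 → ℤ) ≃ₗ[ℤ] (Fin 12 → ℤ) :=
  LinearEquiv.ofLinear (reflMap w c) (reflMap w c)
    (LinearMap.ext fun x => reflMap_invol w c hc x)
    (LinearMap.ext fun x => reflMap_invol w c hc x)

lemma reflEquiv_apply (w : Fin 12 → ℤ) (c : ℤ) (hc : c * bform w w = 2) (x : Fin 12 → ℤ) :
    reflEquiv w c hc x = fun i => x i - c * bform x w * w i := rfl

lemma reflEquiv_isom (w : Fin 12 → ℤ) (c : ℤ) (hc : c * bform w w = 2) :
    IsIsom (reflEquiv w c hc) := by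
  intro x y
  show bform (fun i => x i - c * bform x w * w i) (fun i => y i - c * bform y w * w i) = _
  rw [bform_sub_mul]
  have hsym : bform w y = bform y w := bform_symm w y
  linear_combination (c * bform x w * bform y w) * hc - (c * bform x w) * hsym

def signEquiv (ε : Fin 12 → ℤ) (hε : ∀ i, ε i * ε i = 1) :
    (Fin 12 → ℤ) ≃ₗ[ℤ] (Fin 12 → ℤ) where
  toFun x := fun i => ε i * x i
  invFun x := fun i => ε i * x i
  map_add' x y := by funext i; show ε i * (x i + y i) = _; simp [Pi.add_apply]; ring
  map_smul' a x := by funext i; show ε i * (a * x i) = _; simp [Pi.smul_apply]; ring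
  left_inv x := by funext i; show ε i * (ε i * x i) = x i; rw [← mul_assoc, hε i, one_mul]
  right_inv x := by funext i; show ε i * (ε i * x i) = x i; rw [← mul_assoc, hε i, one_mul]

lemma signEquiv_apply (ε : Fin 12 → ℤ) (hε : ∀ i, ε i * ε i = 1) (x : Fin 12 → ℤ) :
    signEquiv ε hε x = fun i => ε i * x i := rfl

lemma signEquiv_isom (ε : Fin 12 → ℤ) (hε : ∀ i, ε i * ε i = 1) : IsIsom (signEquiv ε hε) := by
  intro x y
  show ∑ i, (ε i * x i) * (ε i * y i) * dd i = _
  exact Finset.sum_congr rfl fun i _ => by linear_combination (x i * y i * dd i) * hε i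

def permEquiv (σ : Equiv.Perm (Fin 12)) : (Fin 12 → ℤ) ≃ₗ[ℤ] (Fin 12 → ℤ) where
  toFun x := fun i => x (σ i)
  invFun x := fun i => x (σ.symm i)
  map_add' x y := rfl
  map_smul' a x := rfl
  left_inv x := by funext i; simp
  right_inv x := by funext i; simp

lemma permEquiv_apply (σ : Equiv.Perm (Fin 12)) (x : Fin 12 → ℤ) :
    permEquiv σ x = fun i => x (σ i) := rfl

lemma permEquiv_isom (σ : Equiv.Perm (Fin 12)) (hσ : ∀ i, dd (σ i) = dd i) :
    IsIsom (permEquiv σ) := by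
  intro x y
  show ∑ i, x (σ i) * y (σ i) * dd i = _
  calc ∑ i, x (σ i) * y (σ i) * dd i = ∑ i, x (σ i) * y (σ i) * dd (σ i) :=
        Finset.sum_congr rfl fun i _ => by rw [hσ i]
    _ = bform x y := Equiv.sum_comp σ (fun j => x j * y j * dd j)

def Normd (w : Fin 12 → ℤ) : Prop :=
  (∀ i, 0 ≤ w i) ∧ w 1 ≤ w 0 ∧
    (∀ i j : Fin 12, 2 ≤ (i : ℕ) → (i : ℕ) ≤ (j : ℕ) → w i ≤ w j)

def epf (σ : Equiv.Perm (Fin 10)) : Fin 12 → Fin 12 := fun i =>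
  if h : (i : ℕ) < 2 then i else
    ⟨((σ ⟨(i : ℕ) - 2, by omega⟩ : Fin 10) : ℕ) + 2, by omega⟩

lemma epf_low (σ : Equiv.Perm (Fin 10)) (i : Fin 12) (h : (i : ℕ) < 2) :
    epf σ i = i := by unfold epf; rw [dif_pos h]

lemma epf_high (σ : Equiv.Perm (Fin 10)) (i : Fin 12) (h : ¬ (i : ℕ) < 2) :
    epf σ i = ⟨((σ ⟨(i : ℕ) - 2, by omega⟩ : Fin 10) : ℕ) + 2, by omega⟩ := by
  unfold epf; rw [dif_neg h]

lemma epf_inv (σ : Equiv.Perm (Fin 10)) (i : Fin 12) : epf σ.symm (epf σ i) = i := by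
  by_cases h : (i : ℕ) < 2
  · rw [epf_low σ i h, epf_low σ.symm i h]
  · rw [epf_high σ i h, epf_high σ.symm _ (by simp)]
    have h2 : (⟨((σ ⟨(i : ℕ) - 2, by omega⟩ : Fin 10) : ℕ) + 2 - 2, by omega⟩ : Fin 10) =
        σ ⟨(i : ℕ) - 2, by omega⟩ := by
      apply Fin.ext; simp
    apply Fin.ext
    simp only [h2, Equiv.symm_apply_apply]
    show ((i : ℕ) - 2) + 2 = (i : ℕ)
    omega

def extPerm (σ : Equiv.Perm (Fin 10)) : Equiv.Perm (Fin 12) where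
  toFun := epf σ
  invFun := epf σ.symm
  left_inv := epf_inv σ
  right_inv := by
    intro i
    have := epf_inv σ.symm i
    rwa [Equiv.symm_symm] at this

lemma extPerm_low (σ : Equiv.Perm (Fin 10)) (i : Fin 12) (h : (i : ℕ) < 2) :
    extPerm σ i = i := epf_low σ i h

lemma extPerm_high (σ : Equiv.Perm (Fin 10)) (i : Fin 12) (h : ¬ (i : ℕ) < 2) :
    extPerm σ i = ⟨((σ ⟨(i : ℕ) - 2, by omega⟩ : Fin 10) : ℕ) + 2, by omega⟩ := epf_high σ i h

lemma extPerm_dd (σ : Equiv.Perm (Fin 10)) : ∀ i, dd (extPerm σ i) = dd i := by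
  intro i
  by_cases h : (i : ℕ) < 2
  · rw [extPerm_low σ i h]
  · rw [extPerm_high σ i h]
    unfold dd
    rw [if_neg (by simp), if_neg h]

lemma swap_dd : ∀ i : Fin 12, dd (Equiv.swap (0 : Fin 12) 1 i) = dd i := by
  intro i
  rcases eq_or_ne i 0 with h | h
  · subst h; rw [Equiv.swap_apply_left]; rfl
  rcases eq_or_ne i 1 with h1 | h1
  · subst h1; rw [Equiv.swap_apply_right]; rfl
  · rw [Equiv.swap_apply_of_ne_of_ne h h1]

lemma normalizeV (v : Fin 12 → ℤ) :
    ∃ g : (Fin 12 → ℤ) ≃ₗ[ℤ] (Fin 12 → ℤ), IsIsom g ∧ Normd (g v) ∧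
      ((g v) 0) ^ 2 + ((g v) 1) ^ 2 = (v 0) ^ 2 + (v 1) ^ 2 := by
  classical
  -- step 1: signs
  set ε : Fin 12 → ℤ := fun i => if 0 ≤ v i then 1 else -1 with hεdef
  have hε : ∀ i, ε i * ε i = 1 := by
    intro i; by_cases h : 0 ≤ v i <;> simp [hεdef, h]
  set g1 := signEquiv ε hε with hg1
  set w1 := g1 v with hw1
  have hw1i : ∀ i, w1 i = ε i * v i := by
    intro i; rw [hw1, hg1, signEquiv_apply]
  have hw1pos : ∀ i, 0 ≤ w1 i := by
    intro i; rw [hw1i]; by_cases h : 0 ≤ v i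
    · simpa [hεdef, h] using h
    · simp [hεdef, h]; omega
  have hw1sq : ∀ i, w1 i ^ 2 = v i ^ 2 := by
    intro i; rw [hw1i]; by_cases h : 0 ≤ v i <;> simp [hεdef, h] <;> ring
  -- step 2: sort last ten
  set f : Fin 10 → ℤ := fun k => w1 ⟨(k : ℕ) + 2, by omega⟩ with hf
  set σ := Tuple.sort f with hσ
  set g2 := permEquiv (extPerm σ) with hg2
  set w2 := g2 w1 with hw2
  have hw2i : ∀ i, w2 i = w1 (extPerm σ i) := by
    intro i; rw [hw2, hg2, permEquiv_apply]
  have hw2pos : ∀ i, 0 ≤ w2 i := fun i => by rw [hw2i]; exact hw1pos _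
  have hw2low : ∀ i : Fin 12, (i : ℕ) < 2 → w2 i = w1 i := by
    intro i h; rw [hw2i, extPerm_low σ i h]
  have hw2sorted : ∀ i j : Fin 12, 2 ≤ (i : ℕ) → (i : ℕ) ≤ (j : ℕ) → w2 i ≤ w2 j := by
    intro i j hi hij
    have hj : 2 ≤ (j : ℕ) := le_trans hi hij
    rw [hw2i, hw2i, extPerm_high σ i (by omega), extPerm_high σ j (by omega)]
    have hmono := Tuple.monotone_sort f
      (a := ⟨(i : ℕ) - 2, by omega⟩) (b := ⟨(j : ℕ) - 2, by omega⟩)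
      (by simp [Fin.le_def]; omega)
    simpa [hf] using hmono
  have htv : (g1.trans g2) v = w2 := by
    rw [LinearEquiv.trans_apply, ← hw1, ← hw2]
  -- step 3: possibly swap first two
  rcases le_or_gt (w2 1) (w2 0) with hsw | hsw
  · refine ⟨g1.trans g2, (signEquiv_isom ε hε).trans (permEquiv_isom _ (extPerm_dd σ)), ?_, ?_⟩
    · rw [htv]; exact ⟨hw2pos, hsw, hw2sorted⟩
    · rw [htv]
      rw [hw2low 0 (by norm_num), hw2low 1 (by norm_num), hw1sq, hw1sq]
  · set g3 := permEquiv (Equiv.swap (0 : Fin 12) 1) with hg3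
    have htv3 : ∀ i, ((g1.trans g2).trans g3) v i = w2 (Equiv.swap (0 : Fin 12) 1 i) := by
      intro i
      rw [LinearEquiv.trans_apply, htv, hg3, permEquiv_apply]
    refine ⟨(g1.trans g2).trans g3,
      ((signEquiv_isom ε hε).trans (permEquiv_isom _ (extPerm_dd σ))).trans
        (permEquiv_isom _ swap_dd), ?_, ?_⟩
    · constructor
      · intro i; rw [htv3]; exact hw2pos _
      constructor
      · rw [htv3, htv3, Equiv.swap_apply_left, Equiv.swap_apply_right]; exact le_of_lt hsw
      · intro i j hi hij
        rw [htv3, htv3]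
        have hne0 : i ≠ 0 := by
          intro h; subst h; simp at hi
        have hne1 : i ≠ 1 := by
          intro h; subst h; simp [Fin.val_one] at hi
        have hjne0 : j ≠ 0 := by
          intro h; subst h; simp at hij; omega
        have hjne1 : j ≠ 1 := by
          intro h; subst h; simp [Fin.val_one] at hij; omega
        rw [Equiv.swap_apply_of_ne_of_ne hne0 hne1, Equiv.swap_apply_of_ne_of_ne hjne0 hjne1]
        exact hw2sorted i j hi hij
    · rw [htv3, htv3, Equiv.swap_apply_left, Equiv.swap_apply_right]
      rw [hw2low 0 (by norm_num), hw2low 1 (by norm_num), hw1sq, hw1sq]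
      ring


set_option maxHeartbeats 1000000 in
lemma core (p q c2 c3 c4 c5 c6 c7 c8 c9 c10 c11 : ℤ)
    (hq0 : 0 ≤ q) (hqp : q ≤ p) (hp : 1 ≤ p) (h2 : 0 ≤ c2)
    (h23 : c2 ≤ c3) (h34 : c3 ≤ c4) (h45 : c4 ≤ c5) (h56 : c5 ≤ c6) (h67 : c6 ≤ c7)
    (h78 : c7 ≤ c8) (h89 : c8 ≤ c9) (h910 : c9 ≤ c10) (h1011 : c10 ≤ c11)
    (hnorm : p^2 + q^2 + 1 =
      c2^2 + c3^2 + c4^2 + c5^2 + c6^2 + c7^2 + c8^2 + c9^2 + c10^2 + c11^2) :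
    (p < c11 + c10 + c9 ∧ c11 + c10 + c9 < 3*p) ∨
    (c11 < p + q ∧ p + q < 2*c11) ∨
    (p + q < c11 + c10 + c9 + c8 ∧ c11 + c10 + c9 + c8 < 2*(p+q)) := by
  by_contra hcon
  push_neg at hcon
  obtain ⟨hB, hC, hE⟩ := hcon
  have h8 : 0 ≤ c8 := by linarith
  have h9 : 0 ≤ c9 := by linarith
  have h10 : 0 ≤ c10 := by linarith
  have h11 : 0 ≤ c11 := by linarith
  rcases le_or_gt (c11 + c10 + c9) p with hu | hu
  · -- s3 ≤ p
    rcases le_or_gt (c11 + c10 + c9 + c8) (p + q) with hs4 | hs4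
    · -- main inequality case
      set u := c11 + c10 + c9 with hudef
      set t := c8 with htdef
      have h3t : 3*t ≤ u := by rw [hudef, htdef]; linarith
      have hu0 : (0:ℤ) ≤ u := by rw [hudef]; linarith
      have hQ : p^2 + q^2 + 1 ≤ (u - 2*t)*u + 7*t^2 := by
        have htail : c2^2 + c3^2 + c4^2 + c5^2 + c6^2 + c7^2 + c8^2 ≤ 7*t^2 := by
          nlinarith [mul_self_le_mul_self h2 (by linarith : c2 ≤ c8),
            mul_self_le_mul_self (by linarith : (0:ℤ) ≤ c3) (by linarith : c3 ≤ c8),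
            mul_self_le_mul_self (by linarith : (0:ℤ) ≤ c4) (by linarith : c4 ≤ c8),
            mul_self_le_mul_self (by linarith : (0:ℤ) ≤ c5) (by linarith : c5 ≤ c8),
            mul_self_le_mul_self (by linarith : (0:ℤ) ≤ c6) (by linarith : c6 ≤ c8),
            mul_self_le_mul_self (by linarith : (0:ℤ) ≤ c7) (by linarith : c7 ≤ c8)]
        have htop : c9^2 + c10^2 + c11^2 ≤ c11 * u := by
          have e1 : 0 ≤ (c11 - c9) * c9 := mul_nonneg (by linarith) h9
          have e2 : 0 ≤ (c11 - c10) * c10 := mul_nonneg (by linarith) h10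
          rw [hudef]; nlinarith [e1, e2]
        have hc11u : c11 * u ≤ (u - 2*t) * u := by
          have hle : c11 ≤ u - 2*t := by rw [hudef, htdef]; linarith
          nlinarith [mul_nonneg (sub_nonneg.mpr hle) hu0]
        linarith
      have he0 : 0 ≤ p - u := by linarith
      have h1 : 0 ≤ (u - 3*t) * t := mul_nonneg (by linarith) h8
      rcases le_or_gt t (p - u) with hte | hte
      · have h2' : t * t ≤ (p - u) * (p - u) := mul_self_le_mul_self h8 hte
        have h3 : 0 ≤ u * (p - u) := mul_nonneg hu0 he0
        nlinarith [hQ, h1, h2', h3, sq_nonneg q]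
      · have hqt : t - (p - u) ≤ q := by linarith
        have h5 : 0 ≤ (u - t) * (p - u) := mul_nonneg (by linarith) he0
        have h6 : (t - (p - u)) * (t - (p - u)) ≤ q * q :=
          mul_self_le_mul_self (by linarith) hqt
        nlinarith [hQ, h1, h5, h6]
    · -- s4 ≥ 2σ
      have hE2 : 2*(p+q) ≤ c11 + c10 + c9 + c8 := hE hs4
      have : p ≤ c8 := by linarith
      linarith
  · -- s3 > p, so 3p ≤ s3
    have hB2 : 3*p ≤ c11 + c10 + c9 := hB hu
    have hpc11 : p ≤ c11 := by linarith
    rcases le_or_gt (p + q) c11 with hsig | hsig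
    · -- c11 ≥ σ
      have hc11sq : c11^2 ≤ p^2 + q^2 + 1 := by
        linarith [sq_nonneg c2, sq_nonneg c3, sq_nonneg c4, sq_nonneg c5, sq_nonneg c6,
          sq_nonneg c7, sq_nonneg c8, sq_nonneg c9, sq_nonneg c10]
      have hpq2 : (p+q)*(p+q) ≤ c11 * c11 := mul_self_le_mul_self (by linarith) hsig
      have h2pq : 2*p*q ≤ 1 := by nlinarith [hpq2, hc11sq]
      have hqz : q = 0 := by
        by_contra hne
        have hq1 : 1 ≤ q := lt_of_le_of_ne hq0 (Ne.symm hne)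
        have hh : 0 ≤ (q - 1) * (p - 1) := mul_nonneg (by linarith) (by linarith)
        nlinarith [hh]
      have hc11p : c11 = p := by
        by_contra hne
        have hge : p + 1 ≤ c11 := by
          rcases lt_or_ge c11 (p+1) with h | h
          · exact absurd (by linarith : c11 = p) hne
          · exact h
        have hx := mul_self_le_mul_self (by linarith : (0:ℤ) ≤ p + 1) hge
        nlinarith [hx, hc11sq]
      have hc10p : c10 = p := by linarith
      have hc9p : c9 = p := by linarith
      have e1 : q^2 = 0 := by rw [hqz]; norm_num
      have e2 : c11^2 = p^2 := by rw [hc11p]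
      have e3 : c10^2 = p^2 := by rw [hc10p]
      have e4 : c9^2 = p^2 := by rw [hc9p]
      linarith [sq_nonneg c2, sq_nonneg c3, sq_nonneg c4, sq_nonneg c5, sq_nonneg c6,
        sq_nonneg c7, sq_nonneg c8, sq_nonneg (p-1)]
    · have hC2 : 2*c11 ≤ p + q := hC hsig
      have hqp' : q = p := by linarith
      have hc11p : c11 = p := by linarith
      have hc10p : c10 = p := by linarith
      have hc9p : c9 = p := by linarith
      have e1 : q^2 = p^2 := by rw [hqp']
      have e2 : c11^2 = p^2 := by rw [hc11p]
      have e3 : c10^2 = p^2 := by rw [hc10p]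
      have e4 : c9^2 = p^2 := by rw [hc9p]
      have hp1 : p = 1 := by
        have hple : p ≤ 1 := by
          linarith [sq_nonneg c2, sq_nonneg c3, sq_nonneg c4, sq_nonneg c5,
            sq_nonneg c6, sq_nonneg c7, sq_nonneg c8, sq_nonneg (p-1)]
        linarith
      have e5 : p^2 = 1 := by rw [hp1]; norm_num
      have hc8sq : c8^2 ≤ 0 := by
        linarith [sq_nonneg c2, sq_nonneg c3, sq_nonneg c4, sq_nonneg c5,
          sq_nonneg c6, sq_nonneg c7]
      have hc8 : c8 = 0 := by
        have : c8^2 = 0 := le_antisymm hc8sq (sq_nonneg c8)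
        exact pow_eq_zero_iff (by norm_num) |>.mp this
      have h5 : p + q < c11 + c10 + c9 + c8 := by
        rw [hqp', hc11p, hc10p, hc9p, hc8, hp1]; norm_num
      have hE2 := hE h5
      rw [hqp', hc11p, hc10p, hc9p, hc8, hp1] at hE2
      norm_num at hE2

-- Fin value lemmas
lemma fv0 : ((0 : Fin 12) : ℕ) = 0 := rfl
lemma fv1 : ((1 : Fin 12) : ℕ) = 1 := rfl
lemma fv2 : ((2 : Fin 12) : ℕ) = 2 := rfl
lemma fv3 : ((3 : Fin 12) : ℕ) = 3 := rfl
lemma fv4 : ((4 : Fin 12) : ℕ) = 4 := rfl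
lemma fv5 : ((5 : Fin 12) : ℕ) = 5 := rfl
lemma fv6 : ((6 : Fin 12) : ℕ) = 6 := rfl
lemma fv7 : ((7 : Fin 12) : ℕ) = 7 := rfl
lemma fv8 : ((8 : Fin 12) : ℕ) = 8 := rfl
lemma fv9 : ((9 : Fin 12) : ℕ) = 9 := rfl
lemma fv10 : ((10 : Fin 12) : ℕ) = 10 := rfl
lemma fv11 : ((11 : Fin 12) : ℕ) = 11 := rfl

-- reflection vectors
def wB : Fin 12 → ℤ := fun i => if (i : ℕ) = 0 ∨ 9 ≤ (i : ℕ) then 1 else 0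
def wC : Fin 12 → ℤ := fun i => if (i : ℕ) ≤ 1 ∨ (i : ℕ) = 11 then 1 else 0
def wE : Fin 12 → ℤ := fun i => if (i : ℕ) ≤ 1 ∨ 8 ≤ (i : ℕ) then 1 else 0

lemma hcB : (-1 : ℤ) * bform wB wB = 2 := by rw [bform_expand]; norm_num [wB, fv0, fv1, fv2, fv3, fv4, fv5, fv6, fv7, fv8, fv9, fv10, fv11]
lemma hcC : (2 : ℤ) * bform wC wC = 2 := by rw [bform_expand]; norm_num [wC, fv0, fv1, fv2, fv3, fv4, fv5, fv6, fv7, fv8, fv9, fv10, fv11]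
lemma hcE : (-1 : ℤ) * bform wE wE = 2 := by rw [bform_expand]; norm_num [wE, fv0, fv1, fv2, fv3, fv4, fv5, fv6, fv7, fv8, fv9, fv10, fv11]

lemma step (v : Fin 12 → ℤ) (hN : Normd v) (hv : bform v v = -1) (h1 : 1 ≤ v 0) :
    ∃ r : (Fin 12 → ℤ) ≃ₗ[ℤ] (Fin 12 → ℤ), IsIsom r ∧
      ((r v) 0)^2 + ((r v) 1)^2 < (v 0)^2 + (v 1)^2 := by
  obtain ⟨hpos, h10, hsor⟩ := hN
  have hnorm : (v 0)^2 + (v 1)^2 + 1 =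
      (v 2)^2 + (v 3)^2 + (v 4)^2 + (v 5)^2 + (v 6)^2 + (v 7)^2 + (v 8)^2 + (v 9)^2
        + (v 10)^2 + (v 11)^2 := by
    rw [bform_expand] at hv; ring_nf; ring_nf at hv; linarith
  have hcore := core (v 0) (v 1) (v 2) (v 3) (v 4) (v 5) (v 6) (v 7) (v 8) (v 9) (v 10) (v 11)
    (hpos 1) h10 h1
    (hpos 2)
    (hsor 2 3 (by decide) (by decide)) (hsor 3 4 (by decide) (by decide))
    (hsor 4 5 (by decide) (by decide)) (hsor 5 6 (by decide) (by decide))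
    (hsor 6 7 (by decide) (by decide)) (hsor 7 8 (by decide) (by decide))
    (hsor 8 9 (by decide) (by decide)) (hsor 9 10 (by decide) (by decide))
    (hsor 10 11 (by decide) (by decide)) hnorm
  rcases hcore with ⟨hb1, hb2⟩ | ⟨hc1, hc2⟩ | ⟨he1, he2⟩
  · refine ⟨reflEquiv wB (-1) hcB, reflEquiv_isom wB (-1) hcB, ?_⟩
    have ht : bform v wB = v 0 - v 9 - v 10 - v 11 := by
      rw [bform_expand]; norm_num [wB, fv0, fv1, fv2, fv3, fv4, fv5, fv6, fv7, fv8, fv9, fv10, fv11]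
    rw [reflEquiv_apply]
    simp only [ht]
    norm_num [wB, fv0, fv1, fv2, fv3, fv4, fv5, fv6, fv7, fv8, fv9, fv10, fv11]
    nlinarith [hb1, hb2]
  · refine ⟨reflEquiv wC 2 hcC, reflEquiv_isom wC 2 hcC, ?_⟩
    have ht : bform v wC = v 0 + v 1 - v 11 := by
      rw [bform_expand]; norm_num [wC, fv0, fv1, fv2, fv3, fv4, fv5, fv6, fv7, fv8, fv9, fv10, fv11]
    rw [reflEquiv_apply]
    simp only [ht]
    norm_num [wC, fv0, fv1, fv2, fv3, fv4, fv5, fv6, fv7, fv8, fv9, fv10, fv11]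
    nlinarith [hc1, hc2]
  · refine ⟨reflEquiv wE (-1) hcE, reflEquiv_isom wE (-1) hcE, ?_⟩
    have ht : bform v wE = v 0 + v 1 - v 8 - v 9 - v 10 - v 11 := by
      rw [bform_expand]; norm_num [wE, fv0, fv1, fv2, fv3, fv4, fv5, fv6, fv7, fv8, fv9, fv10, fv11]
    rw [reflEquiv_apply]
    simp only [ht]
    norm_num [wE, fv0, fv1, fv2, fv3, fv4, fv5, fv6, fv7, fv8, fv9, fv10, fv11]
    nlinarith [he1, he2]

def e11 : Fin 12 → ℤ := fun i => if (i : ℕ) = 11 then 1 else 0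

lemma sqz (a : ℤ) (h : a^2 ≤ 0) : a = 0 :=
  pow_eq_zero_iff (two_ne_zero) |>.mp (le_antisymm h (sq_nonneg a))

lemma base (v : Fin 12 → ℤ) (hN : Normd v) (hv : bform v v = -1) (h0 : v 0 ≤ 0) : v = e11 := by
  obtain ⟨hpos, h10, hsor⟩ := hN
  have hv0 : v 0 = 0 := le_antisymm h0 (hpos 0)
  have hv1 : v 1 = 0 := le_antisymm (by rw [← hv0]; exact h10) (hpos 1)
  have hnorm : (v 2)^2 + (v 3)^2 + (v 4)^2 + (v 5)^2 + (v 6)^2 + (v 7)^2 + (v 8)^2 + (v 9)^2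
      + (v 10)^2 + (v 11)^2 = 1 := by
    rw [bform_expand] at hv; ring_nf at hv ⊢
    rw [hv0, hv1] at hv; linarith
  have mono : ∀ i j : Fin 12, 2 ≤ (i : ℕ) → (i : ℕ) ≤ (j : ℕ) → v i ≤ v j := hsor
  have hle : ∀ k : Fin 12, 2 ≤ (k : ℕ) → v k ≤ v 11 := fun k hk =>
    mono k 11 hk (by exact Nat.lt_succ_iff.mp k.isLt)
  have h2pos : ∀ k : Fin 12, 0 ≤ v k := hpos
  -- v 11 ≤ 1
  have h11le : v 11 ≤ 1 := by
    by_contra hgt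
    push_neg at hgt
    have h2 : 2 ≤ v 11 := hgt
    have : 4 ≤ (v 11)^2 := by nlinarith
    nlinarith [sq_nonneg (v 2), sq_nonneg (v 3), sq_nonneg (v 4), sq_nonneg (v 5),
      sq_nonneg (v 6), sq_nonneg (v 7), sq_nonneg (v 8), sq_nonneg (v 9), sq_nonneg (v 10)]
  have h11pos : 1 ≤ v 11 := by
    by_contra hlt
    push_neg at hlt
    have h110 : v 11 = 0 := le_antisymm (by omega) (hpos 11)
    have : ∀ k : Fin 12, 2 ≤ (k : ℕ) → v k = 0 := fun k hk =>
      le_antisymm (h110 ▸ hle k hk) (hpos k)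
    rw [this 2 (by decide), this 3 (by decide), this 4 (by decide), this 5 (by decide),
      this 6 (by decide), this 7 (by decide), this 8 (by decide), this 9 (by decide),
      this 10 (by decide), this 11 (by decide)] at hnorm
    norm_num at hnorm
  have h11 : v 11 = 1 := le_antisymm h11le h11pos
  have hrest : ∀ k : Fin 12, 2 ≤ (k : ℕ) → (k : ℕ) ≤ 10 → v k = 0 := by
    intro k hk hk10
    have h1 : (v k)^2 ≤ 0 := by
      have e : (v 11)^2 = 1 := by rw [h11]; norm_num
      have sq2 : (v k)^2 ≤ (v 10)^2 := by
        have := mono k 10 hk hk10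
        nlinarith [hpos k]
      nlinarith [sq_nonneg (v 2), sq_nonneg (v 3), sq_nonneg (v 4), sq_nonneg (v 5),
        sq_nonneg (v 6), sq_nonneg (v 7), sq_nonneg (v 8), sq_nonneg (v 9), sq_nonneg (v 10),
        sq_nonneg (v k)]
    exact sqz _ h1
  funext i
  have hival : (i : ℕ) < 12 := i.isLt
  by_cases hi11 : (i : ℕ) = 11
  · have hieq : i = 11 := Fin.ext (by rw [hi11]; rfl)
    rw [hieq, h11]
    show (1 : ℤ) = if ((11 : Fin 12) : ℕ) = 11 then 1 else 0
    decide
  · have he0 : e11 i = 0 := by simp [e11, hi11]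
    rw [he0]
    by_cases h01 : (i : ℕ) < 2
    · by_cases hiz : (i : ℕ) = 0
      · have : i = 0 := Fin.ext (by rw [hiz]; rfl)
        rw [this, hv0]
      · have : i = 1 := Fin.ext (by show (i : ℕ) = 1; omega)
        rw [this, hv1]
    · exact hrest i (by omega) (by omega)

lemma descend (n : ℕ) : ∀ v : Fin 12 → ℤ, bform v v = -1 → (v 0)^2 + (v 1)^2 ≤ (n : ℤ) →
    ∃ g : (Fin 12 → ℤ) ≃ₗ[ℤ] (Fin 12 → ℤ), IsIsom g ∧ g v = e11 := by
  induction n with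
  | zero =>
    intro v hv hb
    obtain ⟨g, hgi, hgN, hgm⟩ := normalizeV v
    refine ⟨g, hgi, base (g v) hgN (by rw [hgi v v, hv]) ?_⟩
    by_contra hcon
    push_neg at hcon
    have h1 : 1 ≤ g v 0 := hcon
    have h2 : 1 ≤ (g v 0)^2 := by nlinarith
    push_cast at hb
    linarith [sq_nonneg (g v 1), sq_nonneg (v 0), sq_nonneg (v 1)]
  | succ n ih =>
    intro v hv hb
    obtain ⟨g, hgi, hgN, hgm⟩ := normalizeV v
    rcases le_or_gt (g v 0) 0 with h0 | h0
    · exact ⟨g, hgi, base (g v) hgN (by rw [hgi v v, hv]) h0⟩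
    · obtain ⟨r, hri, hrm⟩ := step (g v) hgN (by rw [hgi v v, hv]) h0
      have hbound : ((r (g v)) 0)^2 + ((r (g v)) 1)^2 ≤ (n : ℤ) := by
        have : ((r (g v)) 0)^2 + ((r (g v)) 1)^2 < (n : ℤ) + 1 := by
          push_cast at hb ⊢; linarith
        linarith [Int.lt_add_one_iff.mp this]
      obtain ⟨g2, hg2i, hg2v⟩ := ih (r (g v)) (by rw [hri (g v) (g v), hgi v v, hv]) hbound
      refine ⟨(g.trans r).trans g2, (hgi.trans hri).trans hg2i, ?_⟩
      show g2 (r (g v)) = e11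
      exact hg2v

lemma fv11' : ((11 : Fin 12) : ℕ) = 11 := rfl

lemma gram_eq_bform (x y : Fin 12 → ℤ) : x ⬝ᵥ (gramI 2 10).mulVec y = bform x y := by
  unfold gramI bform dd
  rw [dotProduct]
  exact Finset.sum_congr rfl fun i _ => by rw [Matrix.mulVec_diagonal]; ring

lemma gram9_expand (a b : Fin 11 → ℤ) : a ⬝ᵥ (gramI 2 9).mulVec b =
    ∑ i : Fin 11, a i * b i * (if (i : ℕ) < 2 then 1 else -1) := by
  unfold gramI
  rw [dotProduct]
  exact Finset.sum_congr rfl fun i _ => by rw [Matrix.mulVec_diagonal]; ring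

lemma bform_e11 (z : Fin 12 → ℤ) : bform z e11 = - z 11 := by
  rw [bform_expand]
  norm_num [e11, show ((0:Fin 12):ℕ) = 0 from rfl, show ((1:Fin 12):ℕ) = 1 from rfl,
    show ((2:Fin 12):ℕ) = 2 from rfl, show ((3:Fin 12):ℕ) = 3 from rfl,
    show ((4:Fin 12):ℕ) = 4 from rfl, show ((5:Fin 12):ℕ) = 5 from rfl,
    show ((6:Fin 12):ℕ) = 6 from rfl, show ((7:Fin 12):ℕ) = 7 from rfl,
    show ((8:Fin 12):ℕ) = 8 from rfl, show ((9:Fin 12):ℕ) = 9 from rfl,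
    show ((10:Fin 12):ℕ) = 10 from rfl, fv11']

lemma mem_perp (v x : Fin 12 → ℤ) :
    x ∈ perpSub (gramI 2 10) (Submodule.span ℤ {v}) ↔ bform x v = 0 := by
  constructor
  · intro h
    have := h v (Submodule.mem_span_singleton_self v)
    rwa [gram_eq_bform] at this
  · intro h a ha
    obtain ⟨k, rfl⟩ := Submodule.mem_span_singleton.mp ha
    rw [gram_eq_bform]
    calc bform x (k • v) = k * bform v x := by rw [bform_symm, bform_smul_left]
    _ = k * bform x v := by rw [bform_symm]
    _ = 0 := by rw [h, mul_zero]

def ext11 (y : Fin 11 → ℤ) : Fin 12 → ℤ := fun i => if h : (i : ℕ) < 11 then y ⟨i, h⟩ else 0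


end Stmt8Aux

/-- For every vector `v` of `I_{2,10}` of norm `-1`, the orthogonal
complement of `v`, with the restricted form, is isometric to `I_{2,9}`. -/
theorem period_lattice_stmt8 (v : Fin (2 + 10) → ℤ)
    (hv : v ⬝ᵥ (gramI 2 10).mulVec v = -1) :
    ∃ e : perpSub (gramI 2 10) (Submodule.span ℤ {v}) ≃ₗ[ℤ] (Fin (2 + 9) → ℤ),
      ∀ x y : perpSub (gramI 2 10) (Submodule.span ℤ {v}),
        (x : Fin (2 + 10) → ℤ) ⬝ᵥ (gramI 2 10).mulVec (y : Fin (2 + 10) → ℤ) =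
          e x ⬝ᵥ (gramI 2 9).mulVec (e y) := by

  have hb : bform v v = -1 := by rw [← gram_eq_bform]; exact hv
  have hmeas : (v 0)^2 + (v 1)^2 ≤ (((v 0)^2 + (v 1)^2).toNat : ℤ) :=
    le_of_eq (Int.toNat_of_nonneg (by positivity)).symm
  obtain ⟨g, hgi, hgv⟩ := descend ((v 0)^2 + (v 1)^2).toNat v hb hmeas
  set P := perpSub (gramI 2 10) (Submodule.span ℤ {v}) with hP
  -- key fact : members map to vectors with last coordinate zero
  have hlast : ∀ x : Fin 12 → ℤ, x ∈ P → g x 11 = 0 := by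
    intro x hx
    have h0 : bform x v = 0 := (mem_perp v x).mp hx
    have h1 : bform (g x) (g v) = 0 := by rw [hgi x v]; exact h0
    rw [hgv, bform_e11] at h1
    linarith
  have hmem : ∀ y : Fin 11 → ℤ, g.symm (ext11 y) ∈ P := by
    intro y
    apply (mem_perp v _).mpr
    have h1 : bform (g (g.symm (ext11 y))) (g v) = bform (g.symm (ext11 y)) v :=
      hgi _ v
    rw [LinearEquiv.apply_symm_apply, hgv, bform_e11] at h1
    rw [← h1]
    show -(if h : ((11:Fin 12) : ℕ) < 11 then _ else (0:ℤ)) = 0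
    rw [dif_neg (by norm_num [fv11'])]
    norm_num
  have hext_lin_add : ∀ y z : Fin 11 → ℤ, ext11 (y + z) = ext11 y + ext11 z := by
    intro y z; funext i; unfold ext11
    by_cases h : (i : ℕ) < 11
    · simp [h]
    · simp [h]
  have hext_lin_smul : ∀ (a : ℤ) (y : Fin 11 → ℤ), ext11 (a • y) = a • ext11 y := by
    intro a y; funext i; unfold ext11
    by_cases h : (i : ℕ) < 11
    · simp [h]
    · simp [h]
  set φ : P →ₗ[ℤ] (Fin 11 → ℤ) :=
    { toFun := fun x => fun i => g (x : Fin 12 → ℤ) ⟨(i : ℕ), by omega⟩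
      map_add' := by
        intro x y
        funext i
        show g ((x : Fin 12 → ℤ) + (y : Fin 12 → ℤ)) ⟨(i : ℕ), by omega⟩ = _
        rw [LinearEquiv.map_add]
        rfl
      map_smul' := by
        intro a x
        funext i
        show g (a • (x : Fin 12 → ℤ)) ⟨(i : ℕ), by omega⟩ = _
        rw [LinearEquiv.map_smul]
        rfl } with hφ
  set ψ : (Fin 11 → ℤ) →ₗ[ℤ] P :=
    { toFun := fun y => ⟨g.symm (ext11 y), hmem y⟩
      map_add' := by
        intro y z
        apply Subtype.ext
        show g.symm (ext11 (y + z)) = _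
        rw [hext_lin_add, LinearEquiv.map_add]
        rfl
      map_smul' := by
        intro a y
        apply Subtype.ext
        show g.symm (ext11 (a • y)) = _
        rw [hext_lin_smul, LinearEquiv.map_smul]
        rfl } with hψ
  have h1 : φ.comp ψ = LinearMap.id := by
    apply LinearMap.ext
    intro y
    funext i
    show g (g.symm (ext11 y)) ⟨(i : ℕ), by omega⟩ = y i
    rw [LinearEquiv.apply_symm_apply]
    unfold ext11
    rw [dif_pos (by exact i.isLt)]
  have h2 : ψ.comp φ = LinearMap.id := by
    apply LinearMap.ext
    intro x
    apply Subtype.ext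
    show g.symm (ext11 (φ x)) = (x : Fin 12 → ℤ)
    rw [LinearEquiv.symm_apply_eq]
    funext i
    unfold ext11
    by_cases h : (i : ℕ) < 11
    · rw [dif_pos h]
      show g (x : Fin 12 → ℤ) ⟨(i : ℕ), by omega⟩ = g (x : Fin 12 → ℤ) i
      congr 1
      all_goals exact Fin.ext rfl
    · rw [dif_neg h]
      have : i = 11 := Fin.ext (by omega)
      rw [this]
      exact (hlast _ x.2).symm
  refine ⟨LinearEquiv.ofLinear φ ψ h1 h2, ?_⟩
  intro x y
  show (x : Fin 12 → ℤ) ⬝ᵥ (gramI 2 10).mulVec (y : Fin 12 → ℤ) = _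
  rw [gram_eq_bform]
  have hform : bform (x : Fin 12 → ℤ) (y : Fin 12 → ℤ) =
      bform (g (x : Fin 12 → ℤ)) (g (y : Fin 12 → ℤ)) := (hgi _ _).symm
  rw [hform]
  show _ = (φ x) ⬝ᵥ (gramI 2 9).mulVec (φ y)
  rw [gram9_expand]
  unfold bform
  rw [Fin.sum_univ_castSucc]
  have hx11 : g (x : Fin 12 → ℤ) (Fin.last 11) = 0 := hlast _ x.2
  rw [hx11]
  simp only [zero_mul, mul_zero, add_zero]
  apply Finset.sum_congr rfl
  intro i _
  show g (x : Fin 12 → ℤ) (Fin.castSucc i) * g (y : Fin 12 → ℤ) (Fin.castSucc i)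
      * dd (Fin.castSucc i) = _
  have hcs : (Fin.castSucc i : Fin 12) = ⟨(i : ℕ), by omega⟩ := Fin.ext rfl
  have hdd : dd (Fin.castSucc i) = (if (i : ℕ) < 2 then 1 else -1) := by
    unfold dd
    rw [Fin.coe_castSucc]
  rw [hdd, hcs]
  rfl
end

section
/- Every rank-2 primitive isotropic sublattice V of I_{2,10} contains a primitive vector w such that the lattice w⊥/⟨w⟩ (with its induced bilinear form) is odd. -/
open Matrix

lemma odd_perp (w : Fin (2 + 10) → ℤ) (i j : Fin (2 + 10))
    (hi : Even (w i)) (hj : Odd (w j)) :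
    ¬ ∀ x : perpSub (gramI 2 10) (Submodule.span ℤ {w}),
        Even ((x : Fin (2 + 10) → ℤ) ⬝ᵥ (gramI 2 10).mulVec (x : Fin (2 + 10) → ℤ)) := by
  set ε : Fin (2+10) → ℤ := fun k => if (k : ℕ) < 2 then 1 else -1 with hε
  have hG : gramI 2 10 = Matrix.diagonal ε := rfl
  have hij : i ≠ j := by
    rintro rfl
    exact (Int.not_odd_iff_even.mpr hi) hj
  have hεodd : ∀ k, Odd (ε k) := by
    intro k
    by_cases h : (k : ℕ) < 2 <;> simp only [hε, h, if_true, if_false] <;> simp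
  set A : ℤ := ε j * w j with hA
  set B : ℤ := -(ε i * w i) with hB
  set x : Fin (2+10) → ℤ := A • Pi.single i 1 + B • Pi.single j 1 with hx
  have hdot : ∀ v : Fin (2+10) → ℤ, x ⬝ᵥ v = A * v i + B * v j := by
    intro v
    rw [hx, add_dotProduct, smul_dotProduct, smul_dotProduct,
      single_dotProduct, single_dotProduct]
    simp only [smul_eq_mul]
    ring
  have hxi : x i = A := by
    simp [hx, Pi.single_eq_same, Pi.single_eq_of_ne hij, Pi.single_eq_of_ne hij.symm]
  have hxj : x j = B := by
    simp [hx, Pi.single_eq_same, Pi.single_eq_of_ne hij, Pi.single_eq_of_ne hij.symm]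
  have hmem : x ∈ perpSub (gramI 2 10) (Submodule.span ℤ {w}) := by
    intro a ha
    obtain ⟨k, rfl⟩ := Submodule.mem_span_singleton.mp ha
    rw [Matrix.mulVec_smul, dotProduct_smul, hdot]
    have h' : ∀ l, (gramI 2 10).mulVec w l = ε l * w l := by
      intro l; rw [hG, Matrix.mulVec_diagonal]
    rw [h' i, h' j]
    simp only [hA, hB, smul_eq_mul]
    ring
  intro hall
  have hEv := hall ⟨x, hmem⟩
  simp only [Submodule.coe_mk] at hEv
  have hnorm : x ⬝ᵥ (gramI 2 10).mulVec x = A * (ε i * A) + B * (ε j * B) := by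
    rw [hdot]
    have h' : ∀ l, (gramI 2 10).mulVec x l = ε l * x l := by
      intro l; rw [hG, Matrix.mulVec_diagonal]
    rw [h' i, h' j, hxi, hxj]
  rw [hnorm] at hEv
  have hAodd : Odd A := (hεodd j).mul hj
  have hBeven : Even B := ((hi.mul_left (ε i))).neg
  have h1 : Odd (A * (ε i * A)) := hAodd.mul ((hεodd i).mul hAodd)
  have h2 : Even (B * (ε j * B)) := hBeven.mul_right _
  obtain ⟨a, ha⟩ := h1
  obtain ⟨b2, hb2⟩ := h2
  obtain ⟨c, hc⟩ := hEv
  omega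

lemma no_half (V : Submodule ℤ (Fin (2+10) → ℤ)) (hprim : IsPrimSub V)
    (b : Module.Basis (Fin 2) ℤ V) (v : V) (i : Fin 2) (hv : b.repr v i = 1)
    (hx : ∀ k, Even ((v : Fin (2+10) → ℤ) k)) : False := by
  choose c hc using hx
  have hv2 : (v : Fin (2+10) → ℤ) = (2:ℤ) • c := by
    funext k
    simp only [Pi.smul_apply, smul_eq_mul]
    rw [hc k]; ring
  have hcV : c ∈ V := hprim c 2 (by norm_num) (by rw [← hv2]; exact v.2)
  have hveq : v = (2:ℤ) • (⟨c, hcV⟩ : V) := Subtype.ext (by simpa using hv2)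
  have h2 := congrArg (fun u : V => (b.repr u) i) hveq
  simp only [_root_.map_smul, Finsupp.smul_apply, smul_eq_mul, hv] at h2
  omega

lemma prim_basis (V : Submodule ℤ (Fin (2+10) → ℤ)) (hprim : IsPrimSub V)
    (b : Module.Basis (Fin 2) ℤ V) (i : Fin 2) : IsPrimVec ((b i : Fin (2+10) → ℤ)) := by
  intro k x hx
  rcases eq_or_ne k 0 with rfl | hk
  · exfalso
    have : (b i : V) = 0 := Subtype.ext (by simpa using hx)
    exact b.ne_zero i this
  · have hxV : x ∈ V := hprim x k hk (by rw [← hx]; exact (b i).2)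
    have heq : (b i : V) = k • (⟨x, hxV⟩ : V) := Subtype.ext (by simpa using hx)
    have h2 := congrArg (fun u : V => (b.repr u) i) heq
    simp only [Module.Basis.repr_self, Finsupp.single_eq_same, _root_.map_smul,
      Finsupp.smul_apply, smul_eq_mul] at h2
    exact IsUnit.of_mul_eq_one (a := k) _ h2.symm

/-- Every rank-2 primitive isotropic sublattice `V` of `I_{2,10}` contains
a primitive vector `w` such that `w⊥/⟨w⟩` (with its induced form) is odd, i.e. some vector
of `w⊥` has odd norm. -/
theorem period_lattice_stmt11 (V : Submodule ℤ (Fin (2 + 10) → ℤ))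
    (hrank : Module.finrank ℤ V = 2) (hprim : IsPrimSub V)
    (hiso : ∀ x ∈ V, ∀ y ∈ V, x ⬝ᵥ (gramI 2 10).mulVec y = 0) :
    ∃ w ∈ V, IsPrimVec w ∧
      ¬ ∀ x : perpSub (gramI 2 10) (Submodule.span ℤ {w}),
          Even ((x : Fin (2 + 10) → ℤ) ⬝ᵥ (gramI 2 10).mulVec (x : Fin (2 + 10) → ℤ)) := by
  have b : Module.Basis (Fin 2) ℤ V := Module.finBasisOfFinrankEq ℤ V hrank
  by_cases h0 : (∃ i, Even ((b 0 : Fin (2+10) → ℤ) i)) ∧ (∃ j, Odd ((b 0 : Fin (2+10) → ℤ) j))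
  · obtain ⟨⟨i, hi⟩, ⟨j, hj⟩⟩ := h0
    exact ⟨b 0, (b 0).2, prim_basis V hprim b 0, odd_perp _ i j hi hj⟩
  by_cases h1 : (∃ i, Even ((b 1 : Fin (2+10) → ℤ) i)) ∧ (∃ j, Odd ((b 1 : Fin (2+10) → ℤ) j))
  · obtain ⟨⟨i, hi⟩, ⟨j, hj⟩⟩ := h1
    exact ⟨b 1, (b 1).2, prim_basis V hprim b 1, odd_perp _ i j hi hj⟩
  exfalso
  have pure : ∀ m : Fin 2, ¬((∃ i, Even ((b m : Fin (2+10) → ℤ) i)) ∧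
        (∃ j, Odd ((b m : Fin (2+10) → ℤ) j))) →
      (∀ k, Even ((b m : Fin (2+10) → ℤ) k)) ∨ (∀ k, Odd ((b m : Fin (2+10) → ℤ) k)) := by
    intro m hm
    rw [not_and_or] at hm
    rcases hm with hm | hm
    · push_neg at hm
      right
      intro k
      exact Int.not_even_iff_odd.mp (hm k)
    · push_neg at hm
      left
      intro k
      exact Int.not_odd_iff_even.mp (hm k)
  rcases pure 0 h0 with hZ0 | hP0
  · exact no_half V hprim b (b 0) 0 (by simp) hZ0
  rcases pure 1 h1 with hZ1 | hP1
  · exact no_half V hprim b (b 1) 1 (by simp) hZ1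
  refine no_half V hprim b (b 0 + b 1) 0 ?_ ?_
  · rw [map_add]
    simp [Module.Basis.repr_self, Finsupp.single_apply]
  · intro k
    have h := (hP0 k).add_odd (hP1 k)
    simpa using h
end

section
/- Let L be an even unimodular ℤ-lattice, A a primitive sublattice of L, and B = A⊥ its orthogonal complement, and suppose A ⊕ B has finite index in L and every element of the dual lattice A* has integral norm. Then: the image of L under orthogonal projection to A ⊗ ℚ is A* and under orthogonal projection to B ⊗ ℚ is B*; every element of B* has integral norm; the two projections induce a group isomorphism g : A*/A → B*/B; and g carries the quadratic form on A*/A given by reducing norms modulo 2 to the corresponding quadratic form on B*/B. -/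
open Matrix

section Stmt17Aux

variable {N : ℕ}

lemma castPair (Gm : Matrix (Fin N) (Fin N) ℤ) (x y : Fin N → ℤ) :
    intToRat N x ⬝ᵥ (Gm.map (Int.cast : ℤ → ℚ)) *ᵥ intToRat N y = ((x ⬝ᵥ Gm *ᵥ y : ℤ) : ℚ) := by
  simp [dotProduct, Matrix.mulVec, intToRat, Matrix.map_apply, Finset.mul_sum]

lemma pair_comm {Gm : Matrix (Fin N) (Fin N) ℤ} (hLs : Gm.IsSymm) (v w : Fin N → ℚ) :
    v ⬝ᵥ (Gm.map (Int.cast : ℤ → ℚ)) *ᵥ w = w ⬝ᵥ (Gm.map (Int.cast : ℤ → ℚ)) *ᵥ v := by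
  have hs : (Gm.map (Int.cast : ℤ → ℚ)).IsSymm := hLs.map _
  rw [Matrix.dotProduct_mulVec, ← hs.eq, Matrix.vecMul_transpose, dotProduct_comm, hs.eq]

lemma int_pair_comm {Gm : Matrix (Fin N) (Fin N) ℤ} (hLs : Gm.IsSymm) (v w : Fin N → ℤ) :
    v ⬝ᵥ Gm *ᵥ w = w ⬝ᵥ Gm *ᵥ v := by
  rw [Matrix.dotProduct_mulVec, ← hLs.eq, Matrix.vecMul_transpose, dotProduct_comm, hLs.eq]

lemma unimod_repr {Gm : Matrix (Fin N) (Fin N) ℤ} (hLu : IsUnit Gm.det) (c : Fin N → ℤ) :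
    ∃ x : Fin N → ℤ, ∀ y : Fin N → ℤ, x ⬝ᵥ Gm *ᵥ y = c ⬝ᵥ y := by
  refine ⟨Gm⁻¹.vecMul c, fun y => ?_⟩
  rw [Matrix.dotProduct_mulVec, Matrix.vecMul_vecMul, Matrix.nonsing_inv_mul _ hLu,
    Matrix.vecMul_one]

section Aux
variable {Gm : Matrix (Fin N) (Fin N) ℤ}

/-- vanishing of the pairing extends from generators to the span (left argument). -/
lemma span_left_zero (S : Set (Fin N → ℤ)) (w : Fin N → ℚ)
    (h : ∀ s ∈ S, intToRat N s ⬝ᵥ (Gm.map (Int.cast : ℤ → ℚ)) *ᵥ w = 0) :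
    ∀ v ∈ Submodule.span ℚ (intToRat N '' S), v ⬝ᵥ (Gm.map (Int.cast : ℤ → ℚ)) *ᵥ w = 0 := by
  intro v hv
  induction hv using Submodule.span_induction with
  | mem x hx => obtain ⟨s, hs, rfl⟩ := hx; exact h s hs
  | zero => simp
  | add x y _ _ hx hy => rw [add_dotProduct, hx, hy, add_zero]
  | smul c x _ hx => rw [smul_dotProduct, hx, smul_zero]

lemma exists_denom (v : Fin N → ℚ) :
    ∃ (m : ℤ) (w : Fin N → ℤ), m ≠ 0 ∧ (m : ℚ) • v = intToRat N w := by
  classical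
  have hint : ∀ i, ∃ z : ℤ, (∏ j, (((v j).den : ℤ) : ℚ)) * v i = (z : ℚ) := by
    intro i
    have hd : ((v i).den : ℤ) ∣ ∏ j, ((v j).den : ℤ) :=
      Finset.dvd_prod_of_mem _ (Finset.mem_univ i)
    obtain ⟨c, hc⟩ := hd
    refine ⟨(v i).num * c, ?_⟩
    have hden : ((v i).den : ℚ) * v i = ((v i).num : ℚ) := by
      rw [mul_comm]; exact Rat.mul_den_eq_num _
    have hc2 : (∏ j, (((v j).den : ℤ) : ℚ)) = ((v i).den : ℚ) * (c : ℚ) := by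
      exact_mod_cast congrArg (Int.cast : ℤ → ℚ) hc
    rw [hc2]
    push_cast
    linear_combination (c : ℚ) * hden
  choose w hw using hint
  refine ⟨∏ j, ((v j).den : ℤ), w, ?_, ?_⟩
  · exact Finset.prod_ne_zero_iff.2 fun i _ => Int.natCast_ne_zero.2 (v i).den_nz
  · funext i
    show ((∏ j, ((v j).den : ℤ) : ℤ) : ℚ) * v i = ((w i : ℤ) : ℚ)
    rw [← hw i]
    push_cast
    ring

lemma mem_span_perp (A : Submodule ℤ (Fin N → ℤ)) (v : Fin N → ℚ) :
    v ∈ Submodule.span ℚ (intToRat N '' (perpSub Gm A : Set (Fin N → ℤ))) ↔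
      ∀ a ∈ A, v ⬝ᵥ (Gm.map (Int.cast : ℤ → ℚ)) *ᵥ intToRat N a = 0 := by
  constructor
  · intro hv a ha
    refine span_left_zero _ _ (fun s hs => ?_) v hv
    rw [castPair, hs a ha, Int.cast_zero]
  · intro h
    obtain ⟨m, w, hm, hmv⟩ := exists_denom v
    have hw : w ∈ perpSub Gm A := by
      intro a ha
      have := h a ha
      have h2 : intToRat N w ⬝ᵥ (Gm.map (Int.cast : ℤ → ℚ)) *ᵥ intToRat N a = 0 := by
        rw [← hmv, smul_dotProduct, this, smul_zero]
      rw [castPair] at h2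
      exact_mod_cast h2
    have hv : v = (m : ℚ)⁻¹ • intToRat N w := by
      rw [← hmv, smul_smul, inv_mul_cancel₀ (by exact_mod_cast hm), one_smul]
    rw [hv]
    exact Submodule.smul_mem _ _ (Submodule.subset_span ⟨w, hw, rfl⟩)

lemma sat_perp (A : Submodule ℤ (Fin N → ℤ)) (z : Fin N → ℤ)
    (hz : intToRat N z ∈ Submodule.span ℚ (intToRat N '' (perpSub Gm A : Set (Fin N → ℤ)))) :
    z ∈ perpSub Gm A := by
  intro a ha
  have := (mem_span_perp A _).1 hz a ha
  rw [castPair] at this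
  exact_mod_cast this

lemma exists_retraction {A : Submodule ℤ (Fin N → ℤ)} (hprim : IsPrimSub A) :
    ∃ p : (Fin N → ℤ) →ₗ[ℤ] (Fin N → ℤ), (∀ x, p x ∈ A) ∧ ∀ a ∈ A, p a = a := by
  have : NoZeroSMulDivisors ℤ ((Fin N → ℤ) ⧸ A) := by
    constructor
    intro k x h
    by_cases hk : k = 0
    · exact Or.inl hk
    · refine Or.inr ?_
      obtain ⟨y, rfl⟩ := Submodule.Quotient.mk_surjective A x
      rw [← Submodule.Quotient.mk_smul, Submodule.Quotient.mk_eq_zero] at h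
      rw [Submodule.Quotient.mk_eq_zero]
      exact hprim y k hk h
  have : Module.Free ℤ ((Fin N → ℤ) ⧸ A) := Module.free_of_finite_type_torsion_free'
  obtain ⟨s, hs⟩ := Module.projective_lifting_property A.mkQ LinearMap.id
    (Submodule.mkQ_surjective A)
  refine ⟨(LinearMap.id : (Fin N → ℤ) →ₗ[ℤ] (Fin N → ℤ)) - s ∘ₗ A.mkQ, fun x => ?_, fun a ha => ?_⟩
  · have hx := LinearMap.congr_fun hs (A.mkQ x)
    simp only [LinearMap.comp_apply, LinearMap.id_apply] at hx
    have happ : ((LinearMap.id : (Fin N → ℤ) →ₗ[ℤ] (Fin N → ℤ)) - s ∘ₗ A.mkQ) x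
        = x - s (A.mkQ x) := rfl
    rw [happ, ← Submodule.Quotient.mk_eq_zero, Submodule.Quotient.mk_sub,
      ← Submodule.mkQ_apply, ← Submodule.mkQ_apply, hx, sub_self]
  · have h0 : A.mkQ a = 0 := (Submodule.Quotient.mk_eq_zero A).2 ha
    have happ : ((LinearMap.id : (Fin N → ℤ) →ₗ[ℤ] (Fin N → ℤ)) - s ∘ₗ A.mkQ) a
        = a - s (A.mkQ a) := rfl
    rw [happ, h0, map_zero, sub_zero]

lemma nondeg (hLu : IsUnit Gm.det) {v : Fin N → ℤ}
    (h : ∀ y, v ⬝ᵥ Gm *ᵥ y = 0) : v = 0 := by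
  have hv : Matrix.vecMul v Gm = 0 := by
    funext i
    have := h (Pi.single i 1)
    rwa [Matrix.dotProduct_mulVec, dotProduct_single, mul_one] at this
  calc v = Matrix.vecMul v 1 := (Matrix.vecMul_one v).symm
    _ = Matrix.vecMul v (Gm * Gm⁻¹) := by rw [Matrix.mul_nonsing_inv _ hLu]
    _ = Matrix.vecMul (Matrix.vecMul v Gm) Gm⁻¹ := (Matrix.vecMul_vecMul v Gm Gm⁻¹).symm
    _ = 0 := by rw [hv, Matrix.zero_vecMul]

lemma perp_prim (A : Submodule ℤ (Fin N → ℤ)) : IsPrimSub (perpSub Gm A) := by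
  intro x k hk hkx
  intro a ha
  have h1 : (k • x) ⬝ᵥ Gm *ᵥ a = 0 := hkx a ha
  rw [smul_dotProduct, smul_eq_mul, mul_eq_zero] at h1
  exact h1.resolve_left hk

lemma double_perp (hLs : Gm.IsSymm) (hLu : IsUnit Gm.det) {A : Submodule ℤ (Fin N → ℤ)}
    (hprim : IsPrimSub A)
    (hfin : ∀ x : Fin N → ℤ, ∃ k : ℤ, k ≠ 0 ∧ k • x ∈ A ⊔ perpSub Gm A) :
    perpSub Gm (perpSub Gm A) = A := by
  apply le_antisymm
  · intro x hx
    obtain ⟨k, hk, hkx⟩ := hfin x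
    rw [Submodule.mem_sup] at hkx
    obtain ⟨a0, ha0, b0, hb0, hab⟩ := hkx
    have hb00 : b0 = 0 := by
      refine nondeg hLu fun y => ?_
      obtain ⟨k', hk', hky⟩ := hfin y
      rw [Submodule.mem_sup] at hky
      obtain ⟨a1, ha1, b1, hb1, hab1⟩ := hky
      have h1 : b0 ⬝ᵥ Gm *ᵥ a1 = 0 := hb0 a1 ha1
      have h2 : b0 ⬝ᵥ Gm *ᵥ b1 = 0 := by
        have e : b0 = k • x - a0 := eq_sub_of_add_eq' hab
        rw [e, sub_dotProduct, smul_dotProduct]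
        have hx1 : x ⬝ᵥ Gm *ᵥ b1 = 0 := hx b1 hb1
        have ha1' : a0 ⬝ᵥ Gm *ᵥ b1 = 0 := by
          rw [int_pair_comm hLs]; exact hb1 a0 ha0
        rw [hx1, ha1', smul_zero, sub_zero]
      have hz : k' • (b0 ⬝ᵥ Gm *ᵥ y) = 0 := by
        rw [← dotProduct_smul, ← Matrix.mulVec_smul, ← hab1, Matrix.mulVec_add,
          dotProduct_add, h1, h2, add_zero]
      exact (smul_eq_zero.mp hz).resolve_left hk'
    rw [hb00, add_zero] at hab
    exact hprim x k hk (hab ▸ ha0)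
  · intro a ha b hb
    rw [int_pair_comm hLs]
    exact hb a ha

lemma key_ext (hLu : IsUnit Gm.det) {A : Submodule ℤ (Fin N → ℤ)} (hprim : IsPrimSub A)
    {a : Fin N → ℚ} (ha : a ∈ relDual Gm A) :
    ∃ x : Fin N → ℤ, ∀ y ∈ A,
      (intToRat N x - a) ⬝ᵥ (Gm.map (Int.cast : ℤ → ℚ)) *ᵥ intToRat N y = 0 := by
  classical
  obtain ⟨p, hpA, hpid⟩ := exists_retraction hprim
  have ha2 : a ∈ pairDual Gm A := ha.2
  have hint : ∀ i, ∃ k : ℤ,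
      a ⬝ᵥ (Gm.map (Int.cast : ℤ → ℚ)) *ᵥ intToRat N (p (Pi.single i 1)) = (k : ℚ) :=
    fun i => ha2 _ (hpA _)
  choose c hc using hint
  obtain ⟨x, hx⟩ := unimod_repr hLu c
  have claim : ∀ y : Fin N → ℤ,
      ((c ⬝ᵥ y : ℤ) : ℚ) = a ⬝ᵥ (Gm.map (Int.cast : ℤ → ℚ)) *ᵥ intToRat N (p y) := by
    set L1 : (Fin N → ℤ) →ₗ[ℤ] ℚ :=
      { toFun := fun y => ((c ⬝ᵥ y : ℤ) : ℚ)
        map_add' := fun y z => by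
          show ((c ⬝ᵥ (y + z) : ℤ) : ℚ) = _
          rw [dotProduct_add]; push_cast; ring
        map_smul' := fun k y => by
          show ((c ⬝ᵥ (k • y) : ℤ) : ℚ) = k • ((c ⬝ᵥ y : ℤ) : ℚ)
          rw [dotProduct_smul, smul_eq_mul, zsmul_eq_mul]
          push_cast; ring } with hL1
    set L2 : (Fin N → ℤ) →ₗ[ℤ] ℚ :=
      ((Matrix.toLinearMap₂' ℚ (Gm.map (Int.cast : ℤ → ℚ)) a).restrictScalars ℤ).comp
        ((intToRat N).comp p) with hL2
    have hL2app : ∀ y, L2 y = a ⬝ᵥ (Gm.map (Int.cast : ℤ → ℚ)) *ᵥ intToRat N (p y) := by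
      intro y
      simp only [hL2, LinearMap.comp_apply, LinearMap.coe_restrictScalars]
      exact Matrix.toLinearMap₂'_apply' _ _ _
    have heq : L1 = L2 := by
      apply Module.Basis.ext (Pi.basisFun ℤ (Fin N))
      intro i
      rw [Pi.basisFun_apply, hL2app]
      show ((c ⬝ᵥ (Pi.single i 1) : ℤ) : ℚ) = _
      rw [dotProduct_single, mul_one, hc i]
    intro y
    have := LinearMap.congr_fun heq y
    rw [hL2app] at this
    exact this
  refine ⟨x, fun y hy => ?_⟩
  rw [sub_dotProduct, castPair, hx y, claim y, hpid y hy, sub_self]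

lemma cross_zero (hLs : Gm.IsSymm) {A : Submodule ℤ (Fin N → ℤ)} {a b : Fin N → ℚ}
    (ha : a ∈ Submodule.span ℚ (intToRat N '' (A : Set (Fin N → ℤ))))
    (hb : b ∈ Submodule.span ℚ (intToRat N '' (perpSub Gm A : Set (Fin N → ℤ)))) :
    a ⬝ᵥ (Gm.map (Int.cast : ℤ → ℚ)) *ᵥ b = 0 := by
  refine span_left_zero (A : Set (Fin N → ℤ)) b (fun s hs => ?_) a ha
  rw [pair_comm hLs]
  exact (mem_span_perp A b).1 hb s hs

lemma sat_A (hLs : Gm.IsSymm) (hLu : IsUnit Gm.det) {A : Submodule ℤ (Fin N → ℤ)}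
    (hprim : IsPrimSub A)
    (hfin : ∀ x : Fin N → ℤ, ∃ k : ℤ, k ≠ 0 ∧ k • x ∈ A ⊔ perpSub Gm A)
    (z : Fin N → ℤ)
    (hz : intToRat N z ∈ Submodule.span ℚ (intToRat N '' (A : Set (Fin N → ℤ)))) : z ∈ A := by
  rw [← double_perp hLs hLu hprim hfin]
  intro b hb
  have h0 : intToRat N z ⬝ᵥ (Gm.map (Int.cast : ℤ → ℚ)) *ᵥ intToRat N b = 0 := by
    refine span_left_zero (A : Set (Fin N → ℤ)) _ (fun s hs => ?_) _ hz
    rw [castPair, int_pair_comm hLs, hb s hs, Int.cast_zero]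
  rw [castPair] at h0
  exact_mod_cast h0

lemma proj_eq (hLs : Gm.IsSymm) (hLu : IsUnit Gm.det) {A : Submodule ℤ (Fin N → ℤ)}
    (hprim : IsPrimSub A) :
    {a : Fin N → ℚ | a ∈ Submodule.span ℚ (intToRat N '' (A : Set (Fin N → ℤ))) ∧
        ∃ x : Fin N → ℤ, intToRat N x - a ∈
          Submodule.span ℚ (intToRat N '' (perpSub Gm A : Set (Fin N → ℤ)))} =
      (relDual Gm A : Set (Fin N → ℚ)) := by
  ext a
  constructor
  · rintro ⟨haspan, x, hx⟩
    refine Submodule.mem_inf.mpr ⟨haspan, fun y hy => ?_⟩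
    refine ⟨x ⬝ᵥ Gm *ᵥ y, ?_⟩
    have h0 := (mem_span_perp A _).1 hx y hy
    rw [sub_dotProduct, sub_eq_zero] at h0
    rw [← h0, castPair]
  · intro ha
    have ha' : a ∈ relDual Gm A := ha
    refine ⟨ha'.1, ?_⟩
    obtain ⟨x, hx⟩ := key_ext hLu hprim ha'
    exact ⟨x, (mem_span_perp A _).2 (fun y hy => hx y hy)⟩

end Aux


/-- Let `L = ℤ^N` be an even unimodular lattice (Gram matrix `Gm`),
`A` a primitive sublattice, `B = A⊥`, with `A ⊕ B` of finite index in `L` and every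
element of `A*` of integral norm.  Then the projection of `L` to `A ⊗ ℚ` is `A*`, the
projection to `B ⊗ ℚ` is `B*`, every element of `B*` has integral norm, and the two
projections induce an isomorphism `A*/A → B*/B` matching the mod-2 norm forms. -/
theorem period_lattice_stmt17 {N : ℕ} (Gm : Matrix (Fin N) (Fin N) ℤ)
    (hLs : Gm.IsSymm) (hLe : EvenGram Gm) (hLu : IsUnit Gm.det)
    (A : Submodule ℤ (Fin N → ℤ)) (hprim : IsPrimSub A)
    (hfin : ∀ x : Fin N → ℤ, ∃ k : ℤ, k ≠ 0 ∧ k • x ∈ A ⊔ perpSub Gm A)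
    (hAdual : ∀ x ∈ relDual Gm A, ∃ k : ℤ,
      x ⬝ᵥ (Gm.map (Int.cast : ℤ → ℚ)).mulVec x = (k : ℚ)) :
    ({a : Fin N → ℚ | a ∈ Submodule.span ℚ (intToRat N '' (A : Set (Fin N → ℤ))) ∧
        ∃ x : Fin N → ℤ, intToRat N x - a ∈
          Submodule.span ℚ (intToRat N '' (perpSub Gm A : Set (Fin N → ℤ)))} =
      (relDual Gm A : Set (Fin N → ℚ))) ∧
    ({b : Fin N → ℚ | b ∈ Submodule.span ℚ (intToRat N '' (perpSub Gm A : Set (Fin N → ℤ))) ∧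
        ∃ x : Fin N → ℤ, intToRat N x - b ∈
          Submodule.span ℚ (intToRat N '' (A : Set (Fin N → ℤ)))} =
      (relDual Gm (perpSub Gm A) : Set (Fin N → ℚ))) ∧
    (∀ b ∈ relDual Gm (perpSub Gm A), ∃ k : ℤ,
      b ⬝ᵥ (Gm.map (Int.cast : ℤ → ℚ)).mulVec b = (k : ℚ)) ∧
    (∃ g : (relDual Gm A ⧸ Submodule.comap (relDual Gm A).subtype
            (Submodule.map (intToRat N) A)) ≃ₗ[ℤ]
          (relDual Gm (perpSub Gm A) ⧸ Submodule.comap (relDual Gm (perpSub Gm A)).subtype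
            (Submodule.map (intToRat N) (perpSub Gm A))),
      (∀ (x : Fin N → ℤ) (a : relDual Gm A) (b : relDual Gm (perpSub Gm A)),
        intToRat N x = (a : Fin N → ℚ) + (b : Fin N → ℚ) →
        g (Submodule.Quotient.mk a) = Submodule.Quotient.mk b) ∧
      (∀ (a : relDual Gm A) (b : relDual Gm (perpSub Gm A)),
        g (Submodule.Quotient.mk a) = Submodule.Quotient.mk b →
        ∃ k : ℤ,
          (b : Fin N → ℚ) ⬝ᵥ (Gm.map (Int.cast : ℤ → ℚ)).mulVec (b : Fin N → ℚ)
            - (a : Fin N → ℚ) ⬝ᵥ (Gm.map (Int.cast : ℤ → ℚ)).mulVec (a : Fin N → ℚ)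
          = 2 * (k : ℚ))) := by
  classical
  have hBprim : IsPrimSub (perpSub Gm A) := perp_prim A
  have hdp : perpSub Gm (perpSub Gm A) = A := double_perp hLs hLu hprim hfin
  have part1 := proj_eq (Gm := Gm) hLs hLu hprim
  have part2 : ({b : Fin N → ℚ | b ∈ Submodule.span ℚ
        (intToRat N '' (perpSub Gm A : Set (Fin N → ℤ))) ∧
        ∃ x : Fin N → ℤ, intToRat N x - b ∈
          Submodule.span ℚ (intToRat N '' (A : Set (Fin N → ℤ)))} =
      (relDual Gm (perpSub Gm A) : Set (Fin N → ℚ))) := by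
    have h := proj_eq (Gm := Gm) hLs hLu hBprim
    rwa [hdp] at h
  -- existence of decompositions
  have exB : ∀ a : relDual Gm A, ∃ x : Fin N → ℤ,
      intToRat N x - (a : Fin N → ℚ) ∈ relDual Gm (perpSub Gm A) := by
    intro a
    obtain ⟨x, hx⟩ := key_ext hLu hprim a.2
    have hspan : intToRat N x - (a : Fin N → ℚ) ∈
        Submodule.span ℚ (intToRat N '' (perpSub Gm A : Set (Fin N → ℤ))) :=
      (mem_span_perp A _).2 hx
    refine ⟨x, Submodule.mem_inf.mpr ⟨hspan, fun y hy => ⟨x ⬝ᵥ Gm *ᵥ y, ?_⟩⟩⟩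
    rw [sub_dotProduct, castPair]
    have h0 : (a : Fin N → ℚ) ⬝ᵥ (Gm.map (Int.cast : ℤ → ℚ)) *ᵥ intToRat N y = 0 :=
      cross_zero hLs a.2.1 (Submodule.subset_span ⟨y, hy, rfl⟩)
    rw [h0, sub_zero]
  have exA : ∀ b : relDual Gm (perpSub Gm A), ∃ x : Fin N → ℤ,
      intToRat N x - (b : Fin N → ℚ) ∈ relDual Gm A := by
    intro b
    obtain ⟨x, hx⟩ := key_ext hLu hBprim b.2
    have hspan : intToRat N x - (b : Fin N → ℚ) ∈
        Submodule.span ℚ (intToRat N '' (perpSub Gm (perpSub Gm A) : Set (Fin N → ℤ))) :=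
      (mem_span_perp _ _).2 hx
    rw [hdp] at hspan
    refine ⟨x, Submodule.mem_inf.mpr ⟨hspan, fun y hy => ⟨x ⬝ᵥ Gm *ᵥ y, ?_⟩⟩⟩
    rw [sub_dotProduct, castPair]
    have h0 : (b : Fin N → ℚ) ⬝ᵥ (Gm.map (Int.cast : ℤ → ℚ)) *ᵥ intToRat N y = 0 := by
      rw [pair_comm hLs]
      exact cross_zero hLs (Submodule.subset_span ⟨y, hy, rfl⟩) b.2.1
    rw [h0, sub_zero]
  refine ⟨part1, part2, ?_, ?_⟩
  · -- integrality of norms on B*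
    intro b hb
    obtain ⟨x, hx⟩ := exA ⟨b, hb⟩
    set a : Fin N → ℚ := intToRat N x - b with ha
    have haA : a ∈ relDual Gm A := hx
    obtain ⟨k, hk⟩ := hAdual a haA
    obtain ⟨m, hm⟩ := hLe x
    have hbspan : b ∈ Submodule.span ℚ (intToRat N '' (perpSub Gm A : Set (Fin N → ℤ))) :=
      hb.1
    have hc1 : a ⬝ᵥ (Gm.map (Int.cast : ℤ → ℚ)) *ᵥ b = 0 := cross_zero hLs haA.1 hbspan
    have hc2 : b ⬝ᵥ (Gm.map (Int.cast : ℤ → ℚ)) *ᵥ a = 0 := by rw [pair_comm hLs]; exact hc1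
    have hxx : intToRat N x ⬝ᵥ (Gm.map (Int.cast : ℤ → ℚ)) *ᵥ intToRat N x
        = ((m + m : ℤ) : ℚ) := by rw [castPair, hm]
    have hax : a + b = intToRat N x := by rw [ha]; abel
    have hsum : a ⬝ᵥ (Gm.map (Int.cast : ℤ → ℚ)) *ᵥ a
        + b ⬝ᵥ (Gm.map (Int.cast : ℤ → ℚ)) *ᵥ b = ((m + m : ℤ) : ℚ) := by
      rw [← hxx, ← hax, add_dotProduct, Matrix.mulVec_add, dotProduct_add, dotProduct_add,
        hc1, hc2]
      ring
    refine ⟨m + m - k, ?_⟩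
    push_cast at hsum hk ⊢
    linear_combination hsum - hk
  · -- the isomorphism
    choose xA hxA using exB
    choose xB hxB using exA
    set FAB : relDual Gm A → relDual Gm (perpSub Gm A) :=
      fun a => ⟨intToRat N (xA a) - (a : Fin N → ℚ), hxA a⟩ with hFAB
    set FBA : relDual Gm (perpSub Gm A) → relDual Gm A :=
      fun b => ⟨intToRat N (xB b) - (b : Fin N → ℚ), hxB b⟩ with hFBA
    set AA : Submodule ℤ (relDual Gm A) :=
      Submodule.comap (relDual Gm A).subtype (Submodule.map (intToRat N) A) with hAA
    set BB : Submodule ℤ (relDual Gm (perpSub Gm A)) :=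
      Submodule.comap (relDual Gm (perpSub Gm A)).subtype
        (Submodule.map (intToRat N) (perpSub Gm A)) with hBB
    have hsatB : ∀ z : Fin N → ℤ,
        intToRat N z ∈ Submodule.span ℚ (intToRat N '' (perpSub Gm A : Set (Fin N → ℤ))) →
        z ∈ perpSub Gm A := fun z hz => sat_perp A z hz
    have hsatA : ∀ z : Fin N → ℤ,
        intToRat N z ∈ Submodule.span ℚ (intToRat N '' (A : Set (Fin N → ℤ))) → z ∈ A :=
      fun z hz => sat_A hLs hLu hprim hfin z hz
    have mkB_eq : ∀ b₁ b₂ : relDual Gm (perpSub Gm A),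
        (∃ z : Fin N → ℤ, intToRat N z = (b₁ : Fin N → ℚ) - b₂) →
        (Submodule.Quotient.mk b₁ : _ ⧸ BB) = Submodule.Quotient.mk b₂ := by
      rintro b₁ b₂ ⟨z, hz⟩
      rw [Submodule.Quotient.eq]
      refine Submodule.mem_comap.mpr (Submodule.mem_map.mpr ⟨z, ?_, ?_⟩)
      · exact hsatB z (hz ▸ Submodule.sub_mem _ b₁.2.1 b₂.2.1)
      · rw [hz]; rfl
    have mkA_eq : ∀ a₁ a₂ : relDual Gm A,
        (∃ z : Fin N → ℤ, intToRat N z = (a₁ : Fin N → ℚ) - a₂) →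
        (Submodule.Quotient.mk a₁ : _ ⧸ AA) = Submodule.Quotient.mk a₂ := by
      rintro a₁ a₂ ⟨z, hz⟩
      rw [Submodule.Quotient.eq]
      refine Submodule.mem_comap.mpr (Submodule.mem_map.mpr ⟨z, ?_, ?_⟩)
      · exact hsatA z (hz ▸ Submodule.sub_mem _ a₁.2.1 a₂.2.1)
      · rw [hz]; rfl
    have gadd : ∀ a₁ a₂ : relDual Gm A,
        (Submodule.Quotient.mk (FAB (a₁ + a₂)) : _ ⧸ BB) =
          Submodule.Quotient.mk (FAB a₁) + Submodule.Quotient.mk (FAB a₂) := by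
      intro a₁ a₂
      rw [← Submodule.Quotient.mk_add]
      refine mkB_eq _ _ ⟨xA (a₁ + a₂) - xA a₁ - xA a₂, ?_⟩
      simp only [hFAB, map_sub, Submodule.coe_add, AddSubmonoid.coe_add]
      abel
    have gadd' : ∀ b₁ b₂ : relDual Gm (perpSub Gm A),
        (Submodule.Quotient.mk (FBA (b₁ + b₂)) : _ ⧸ AA) =
          Submodule.Quotient.mk (FBA b₁) + Submodule.Quotient.mk (FBA b₂) := by
      intro b₁ b₂
      rw [← Submodule.Quotient.mk_add]
      refine mkA_eq _ _ ⟨xB (b₁ + b₂) - xB b₁ - xB b₂, ?_⟩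
      simp only [hFBA, map_sub, Submodule.coe_add, AddSubmonoid.coe_add]
      abel
    set glin : relDual Gm A →ₗ[ℤ] (relDual Gm (perpSub Gm A) ⧸ BB) :=
      (AddMonoidHom.mk' (fun a => Submodule.Quotient.mk (FAB a)) gadd).toIntLinearMap
      with hglin
    set glin' : relDual Gm (perpSub Gm A) →ₗ[ℤ] (relDual Gm A ⧸ AA) :=
      (AddMonoidHom.mk' (fun b => Submodule.Quotient.mk (FBA b)) gadd').toIntLinearMap
      with hglin'
    have hglinapp : ∀ a, glin a = Submodule.Quotient.mk (FAB a) := fun _ => rfl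
    have hglinapp' : ∀ b, glin' b = Submodule.Quotient.mk (FBA b) := fun _ => rfl
    have hker : AA ≤ LinearMap.ker glin := by
      intro a haa
      obtain ⟨a₀, ha₀, ha₀e⟩ := Submodule.mem_map.mp (Submodule.mem_comap.mp haa)
      rw [LinearMap.mem_ker, hglinapp, Submodule.Quotient.mk_eq_zero]
      refine Submodule.mem_comap.mpr (Submodule.mem_map.mpr ⟨xA a - a₀, ?_, ?_⟩)
      · refine hsatB _ ?_
        have : intToRat N (xA a - a₀) = (FAB a : Fin N → ℚ) := by
          rw [map_sub, ha₀e]; rfl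
        rw [this]
        exact (hxA a).1
      · rw [map_sub, ha₀e]; rfl
    have hker' : BB ≤ LinearMap.ker glin' := by
      intro b hbb
      obtain ⟨b₀, hb₀, hb₀e⟩ := Submodule.mem_map.mp (Submodule.mem_comap.mp hbb)
      rw [LinearMap.mem_ker, hglinapp', Submodule.Quotient.mk_eq_zero]
      refine Submodule.mem_comap.mpr (Submodule.mem_map.mpr ⟨xB b - b₀, ?_, ?_⟩)
      · refine hsatA _ ?_
        have : intToRat N (xB b - b₀) = (FBA b : Fin N → ℚ) := by
          rw [map_sub, hb₀e]; rfl
        rw [this]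
        exact (hxB b).1
      · rw [map_sub, hb₀e]; rfl
    set g1 := Submodule.liftQ AA glin hker with hg1
    set g2 := Submodule.liftQ BB glin' hker' with hg2
    have hg1mk : ∀ a, g1 (Submodule.Quotient.mk a) = Submodule.Quotient.mk (FAB a) :=
      fun a => by rw [hg1, Submodule.liftQ_apply, hglinapp]
    have hg2mk : ∀ b, g2 (Submodule.Quotient.mk b) = Submodule.Quotient.mk (FBA b) :=
      fun b => by rw [hg2, Submodule.liftQ_apply, hglinapp']
    have h12 : g1.comp g2 = LinearMap.id := by
      apply LinearMap.ext
      intro q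
      obtain ⟨b, rfl⟩ := Submodule.Quotient.mk_surjective _ q
      rw [LinearMap.comp_apply, hg2mk, hg1mk, LinearMap.id_apply]
      refine mkB_eq _ _ ⟨xA (FBA b) - xB b, ?_⟩
      simp only [hFAB, hFBA, map_sub]
      abel
    have h21 : g2.comp g1 = LinearMap.id := by
      apply LinearMap.ext
      intro q
      obtain ⟨a, rfl⟩ := Submodule.Quotient.mk_surjective _ q
      rw [LinearMap.comp_apply, hg1mk, hg2mk, LinearMap.id_apply]
      refine mkA_eq _ _ ⟨xB (FAB a) - xA a, ?_⟩
      simp only [hFAB, hFBA, map_sub]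
      abel
    refine ⟨LinearEquiv.ofLinear g1 g2 h12 h21, ?_, ?_⟩
    · intro x a b hxab
      rw [LinearEquiv.ofLinear_apply, hg1mk]
      refine mkB_eq _ _ ⟨xA a - x, ?_⟩
      have hb : (b : Fin N → ℚ) = intToRat N x - a := by rw [hxab]; abel
      simp only [hFAB, map_sub, hb]
      abel
    · intro a b hab
      rw [LinearEquiv.ofLinear_apply, hg1mk] at hab
      obtain ⟨z, hzB, hze⟩ := Submodule.mem_map.mp
        (Submodule.mem_comap.mp ((Submodule.Quotient.eq _).mp hab))
      have hze' : intToRat N z = (intToRat N (xA a) - (a : Fin N → ℚ)) - b := hze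
      have hx : intToRat N (xA a - z) = (a : Fin N → ℚ) + b := by
        rw [map_sub, hze']; abel
      obtain ⟨m, hm⟩ := hLe (xA a - z)
      obtain ⟨k, hk⟩ := hAdual a a.2
      have hc1 : (a : Fin N → ℚ) ⬝ᵥ (Gm.map (Int.cast : ℤ → ℚ)) *ᵥ (b : Fin N → ℚ) = 0 :=
        cross_zero hLs a.2.1 b.2.1
      have hc2 : (b : Fin N → ℚ) ⬝ᵥ (Gm.map (Int.cast : ℤ → ℚ)) *ᵥ (a : Fin N → ℚ) = 0 := by
        rw [pair_comm hLs]; exact hc1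
      have hxx : intToRat N (xA a - z) ⬝ᵥ (Gm.map (Int.cast : ℤ → ℚ)) *ᵥ
          intToRat N (xA a - z) = ((m + m : ℤ) : ℚ) := by rw [castPair, hm]
      have hsum : (a : Fin N → ℚ) ⬝ᵥ (Gm.map (Int.cast : ℤ → ℚ)) *ᵥ (a : Fin N → ℚ)
          + (b : Fin N → ℚ) ⬝ᵥ (Gm.map (Int.cast : ℤ → ℚ)) *ᵥ (b : Fin N → ℚ)
          = ((m + m : ℤ) : ℚ) := by
        rw [← hxx, hx, add_dotProduct, Matrix.mulVec_add, dotProduct_add, dotProduct_add,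
          hc1, hc2]
        ring
      refine ⟨m - k, ?_⟩
      push_cast at hsum hk ⊢
      linear_combination hsum - 2 * hk

end Stmt17Aux
end
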